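/- arXiv:2507.14033 — 2 statements merged into one kernel-verified Lean document; each statement's English description precedes it below -/
import Mathlib

section
/- Let y ∈ D be a dominant element. Define L_D(y) ⊆ D by: L_D(θ(m,n)) = {θ^s(m−1,n), θ^s(m,n−1)} and L_D(θ^s(m,n)) = {θ(m,n), θ(m−1,n+1), θ(m+1,n−1)}, where any entry having a negative argument is omitted. Then the set of Bruhat cocovers of y is the disjoint union L(y) = {s1·y, s2·y} ⊎ L_D(y); in particular L(y) ∩ D = L_D(y). Moreover, L(s0·y) = s0·L(y) ⊎ {y}, where s0·L(y) = {s0·w : w ∈ L(y)}. -/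
noncomputable section

open scoped RealInnerProductSpace

/-- The Bruhat strict order on a Coxeter group: the transitive closure of the relation
"multiply on the left by a reflection, increasing the length". -/
def bruhatLT {B : Type*} {W : Type*} [Group W] {M : CoxeterMatrix B}
    (cs : CoxeterSystem M W) : W → W → Prop :=
  Relation.TransGen (fun a b => (∃ t, cs.IsReflection t ∧ b = t * a) ∧ cs.length a < cs.length b)

/-- The Bruhat order on a Coxeter group. -/
def bruhatLE {B : Type*} {W : Type*} [Group W] {M : CoxeterMatrix B}
    (cs : CoxeterSystem M W) (x y : W) : Prop :=
  x = y ∨ bruhatLT cs x y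

/-- The Bruhat interval `[x, y]` as a set. -/
def Iset {B : Type*} {W : Type*} [Group W] {M : CoxeterMatrix B}
    (cs : CoxeterSystem M W) (x y : W) : Set W :=
  {z | bruhatLE cs x z ∧ bruhatLE cs z y}

/-- The Bruhat covers `U(x)` of an element `x`. -/
def Uset {B : Type*} {W : Type*} [Group W] {M : CoxeterMatrix B}
    (cs : CoxeterSystem M W) (x : W) : Set W :=
  {w | bruhatLT cs x w ∧ cs.length w = cs.length x + 1}

/-- The Bruhat cocovers `L(y)` of an element `y`. -/
def Lset {B : Type*} {W : Type*} [Group W] {M : CoxeterMatrix B}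
    (cs : CoxeterSystem M W) (y : W) : Set W :=
  {w | bruhatLT cs w y ∧ cs.length y = cs.length w + 1}

/-- An interval `[x, y]` is full if it contains all Bruhat covers of `x` and all
Bruhat cocovers of `y`. -/
def FullInt {B : Type*} {W : Type*} [Group W] {M : CoxeterMatrix B}
    (cs : CoxeterSystem M W) (x y : W) : Prop :=
  Uset cs x ⊆ Iset cs x y ∧ Lset cs y ⊆ Iset cs x y

/-- Two Bruhat intervals (possibly in different Coxeter groups) are isomorphic as posets. -/
def IntervalIso {B : Type*} {W : Type*} {B' : Type*} {W' : Type*} [Group W] [Group W']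
    {M : CoxeterMatrix B} {M' : CoxeterMatrix B'}
    (cs : CoxeterSystem M W) (cs' : CoxeterSystem M' W') (x y : W) (x' y' : W') : Prop :=
  ∃ f : {z : W // bruhatLE cs x z ∧ bruhatLE cs z y} ≃
        {z : W' // bruhatLE cs' x' z ∧ bruhatLE cs' z y'},
    ∀ u v, bruhatLE cs u.1 v.1 ↔ bruhatLE cs' (f u).1 (f v).1

/-- The group `G` of generic automorphisms: the subgroup of the permutation group of `W`
generated by the Dynkin diagram automorphisms `δ`, `σ` and inversion. -/
def Gsub {W : Type*} [Group W] (dl sg : W ≃* W) : Subgroup (Equiv.Perm W) :=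
  Subgroup.closure {dl.toEquiv, sg.toEquiv, Equiv.inv W}

/-- The Euclidean plane, with coordinates taken in the basis of simple roots of `A₂`. -/
abbrev E2 : Type := ℝ × ℝ

/-- The `A₂` inner product on the plane, in which `(αᵢ, αᵢ) = 2` and `(α₁, α₂) = -1`. -/
def B2 (u v : E2) : ℝ := 2*u.1*v.1 - u.1*v.2 - u.2*v.1 + 2*u.2*v.2

/-- The simple root `α₁`. -/
def a1 : E2 := (1, 0)
/-- The simple root `α₂`. -/
def a2 : E2 := (0, 1)
/-- The fundamental weight `ϖ₁`, satisfying `(αᵢ, ϖⱼ) = δᵢⱼ`. -/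
def fw1 : E2 := (2/3, 1/3)
/-- The fundamental weight `ϖ₂`. -/
def fw2 : E2 := (1/3, 2/3)
/-- `ρ = ϖ₁ + ϖ₂ = α₁ + α₂`. -/
def rho2 : E2 := (1, 1)

/-- The affine reflection `s_{α,k}` of the plane in the line `{v | (α, v) = k}`,
for a root `α` with `(α, α) = 2`. -/
def reflE (a : E2) (k : ℝ) (v : E2) : E2 := v - (B2 a v - k) • a

/-- The barycenter of the alcove of `z`, i.e. the image under the affine action of `z` of
the barycenter `-ρ/3` of the fundamental alcove (whose vertices are `0, -ϖ₁, -ϖ₂`). -/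
def cen {W : Type*} [Group W] (act : W →* Equiv.Perm E2) (z : W) : E2 :=
  act z ((-(1/3 : ℝ)) • rho2)

/-- The weight lattice `Λ = ℤϖ₁ ⊕ ℤϖ₂`. -/
def wLat : Set E2 := {v | ∃ a b : ℤ, v = (a : ℝ) • fw1 + (b : ℝ) • fw2}

/-- The fundamental alcove `A₊`. -/
def AlcoveFund : Set E2 :=
  {v | (-1 < B2 a1 v ∧ B2 a1 v < 0) ∧ (-1 < B2 a2 v ∧ B2 a2 v < 0) ∧
    (-1 < B2 rho2 v ∧ B2 rho2 v < 0)}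

/-- The zone `F_id` of the plane. -/
def Fid : Set E2 := {v | -1 ≤ B2 a1 v ∧ -1 ≤ B2 a2 v ∧ -1 ≤ B2 rho2 v}

/-- The cone `K` of nonnegative combinations of the simple roots. -/
def coneK : Set E2 := {v | ∃ a b : ℝ, 0 ≤ a ∧ 0 ≤ b ∧ v = a • a1 + b • a2}

/-- The set `D` of dominant elements, given functions `θ, θˢ` enumerating them. -/
def Dset {W : Type*} (th ths : ℕ → ℕ → W) : Set W :=
  {w | (∃ m n, w = th m n) ∨ (∃ m n, w = ths m n)}

/-- The polygon `Pgn_{x,y} = F_id ∩ (cen x + K) ∩ (cen y - K)`. -/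
def Pgn {W : Type*} [Group W] (act : W →* Equiv.Perm E2) (x y : W) : Set E2 :=
  {v ∈ Fid | (∃ k ∈ coneK, v = cen act x + k) ∧ (∃ k ∈ coneK, v = cen act y - k)}

/-- The element `x_k`: the product of the first `k` terms of `s₁, s₂, s₀, s₁, s₂, s₀, …`. -/
def xelt {W : Type*} [Group W] {M : CoxeterMatrix (Fin 3)} (cs : CoxeterSystem M W)
    (k : ℕ) : W :=
  ((List.range k).map (fun j => cs.simple (⟨(j + 1) % 3, Nat.mod_lt _ (by norm_num)⟩ : Fin 3))).prod

/-- `zoneOf cs w v` says that `w` is one of the six elements of `W_f` and `v` lies in the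
corresponding zone `F_w` of the plane. -/
def zoneOf {W : Type*} [Group W] {M : CoxeterMatrix (Fin 3)} (cs : CoxeterSystem M W)
    (w : W) (v : E2) : Prop :=
  (w = 1 ∧ v ∈ Fid) ∨
  (w = cs.simple 1 ∧ B2 a1 v ≤ -1 ∧ -1 ≤ B2 rho2 v) ∨
  (w = cs.simple 2 ∧ B2 a2 v ≤ -1 ∧ -1 ≤ B2 rho2 v) ∨
  (w = cs.simple 1 * cs.simple 2 ∧ B2 rho2 v ≤ -1 ∧ 0 ≤ B2 a2 v) ∨
  (w = cs.simple 2 * cs.simple 1 ∧ B2 rho2 v ≤ -1 ∧ 0 ≤ B2 a1 v) ∨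
  (w = cs.simple 1 * cs.simple 2 * cs.simple 1 ∧ B2 a1 v ≤ 0 ∧ B2 a2 v ≤ 0)

/-- Thickness of the interval `[x,y]`: `x + 2αᵢ` and `y - 2αᵢ` belong to `[x,y]` and their
barycenters lie in `F_id`, for `i = 1, 2`. -/
def Thick {W : Type*} [Group W] {M : CoxeterMatrix (Fin 3)} (cs : CoxeterSystem M W)
    (act : W →* Equiv.Perm E2) (Wadd : W → E2 → W) (x y : W) : Prop :=
  Wadd x ((2 : ℝ) • a1) ∈ Iset cs x y ∧ Wadd x ((2 : ℝ) • a2) ∈ Iset cs x y ∧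
  Wadd y (-((2 : ℝ) • a1)) ∈ Iset cs x y ∧ Wadd y (-((2 : ℝ) • a2)) ∈ Iset cs x y ∧
  cen act (Wadd x ((2 : ℝ) • a1)) ∈ Fid ∧ cen act (Wadd x ((2 : ℝ) • a2)) ∈ Fid ∧
  cen act (Wadd y (-((2 : ℝ) • a1))) ∈ Fid ∧ cen act (Wadd y (-((2 : ℝ) • a2))) ∈ Fid

namespace S1geo

/-- point with `(α₁,v) = p + e/3`, `(α₂,v) = q + e/3`, in α-coordinates. -/
def spt (p q e : ℤ) : E2 := (((2*p+q+e : ℤ) : ℝ)/3, ((p+2*q+e : ℤ) : ℝ)/3)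

/-- the length of an element whose barycenter is `spt p q e`. -/
def nN (p q e : ℤ) : ℕ := (p+1).natAbs + (q+1).natAbs + (p+q+e).natAbs

lemma reflE_a1_spt (k p q e : ℤ) :
    reflE a1 (k : ℝ) (spt p q e) = spt (2*k-p-1) (p+q-k+e-1) (3-e) := by
  simp only [reflE, spt, a1, B2, Prod.ext_iff, Prod.smul_mk, smul_eq_mul,
    Prod.mk_sub_mk]
  push_cast
  constructor <;> ring

lemma reflE_a2_spt (k p q e : ℤ) :
    reflE a2 (k : ℝ) (spt p q e) = spt (p+q-k+e-1) (2*k-q-1) (3-e) := by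
  simp only [reflE, spt, a2, B2, Prod.ext_iff, Prod.smul_mk, smul_eq_mul,
    Prod.mk_sub_mk]
  push_cast
  constructor <;> ring

lemma reflE_r_spt (k p q e : ℤ) :
    reflE rho2 (k : ℝ) (spt p q e) = spt (k-q-1) (k-p-1) (3-e) := by
  simp only [reflE, spt, rho2, B2, Prod.ext_iff, Prod.smul_mk, smul_eq_mul,
    Prod.mk_sub_mk]
  push_cast
  constructor <;> ring

lemma spt_inj {p q e p' q' e' : ℤ} (he : e = 1 ∨ e = 2) (he' : e' = 1 ∨ e' = 2)
    (h : spt p q e = spt p' q' e') : p = p' ∧ q = q' ∧ e = e' := by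
  rw [spt, spt, Prod.ext_iff] at h
  obtain ⟨h1, h2⟩ := h
  have e1 : (2*p+q+e : ℤ) = 2*p'+q'+e' := by
    have : ((2*p+q+e : ℤ) : ℝ) = ((2*p'+q'+e' : ℤ) : ℝ) := by linarith
    exact_mod_cast this
  have e2 : (p+2*q+e : ℤ) = p'+2*q'+e' := by
    have : ((p+2*q+e : ℤ) : ℝ) = ((p'+2*q'+e' : ℤ) : ℝ) := by linarith
    exact_mod_cast this
  omega

lemma spt_shift (p q e a b : ℤ) :
    spt p q e + (a : ℝ) • fw1 + (b : ℝ) • fw2 = spt (p+a) (q+b) e := by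
  simp only [spt, fw1, fw2, Prod.ext_iff, Prod.smul_mk, smul_eq_mul, Prod.mk_add_mk]
  push_cast
  constructor <;> ring

end S1geo
namespace S1len
open S1geo

variable {W : Type*} [Group W] {M : CoxeterMatrix (Fin 3)} (cs : CoxeterSystem M W)
variable (act : W →* Equiv.Perm E2)

lemma cen_mul (x z : W) : cen act (x * z) = act x (cen act z) := by
  simp [cen, map_mul]

lemma cen_one : cen act 1 = spt (-1) (-1) 2 := by
  simp only [cen, map_one, Equiv.Perm.coe_one, id_eq, spt, rho2, Prod.smul_mk,
    smul_eq_mul, Prod.ext_iff]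
  push_cast
  constructor <;> ring

section trans
variable (h0 : ∀ v, act (cs.simple 0) v = reflE rho2 (-1) v)
variable (h1 : ∀ v, act (cs.simple 1) v = reflE a1 0 v)
variable (h2 : ∀ v, act (cs.simple 2) v = reflE a2 0 v)

include h0 in
lemma cm0 {z : W} {p q e : ℤ} (h : cen act z = spt p q e) :
    cen act (cs.simple 0 * z) = spt (-q-2) (-p-2) (3-e) := by
  rw [cen_mul, h, h0]
  have := reflE_r_spt (-1) p q e
  push_cast at this ⊢
  rw [this]
  have e1 : (-1:ℤ) - q - 1 = -q-2 := by ring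
  have e2 : (-1:ℤ) - p - 1 = -p-2 := by ring
  rw [e1, e2]

include h1 in
lemma cm1 {z : W} {p q e : ℤ} (h : cen act z = spt p q e) :
    cen act (cs.simple 1 * z) = spt (-p-1) (p+q+e-1) (3-e) := by
  rw [cen_mul, h, h1]
  have := reflE_a1_spt 0 p q e
  push_cast at this ⊢
  rw [this]
  norm_num

include h2 in
lemma cm2 {z : W} {p q e : ℤ} (h : cen act z = spt p q e) :
    cen act (cs.simple 2 * z) = spt (p+q+e-1) (-q-1) (3-e) := by
  rw [cen_mul, h, h2]
  have := reflE_a2_spt 0 p q e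
  push_cast at this ⊢
  rw [this]
  norm_num

include h0 h1 h2 in
lemma coords_exists (z : W) : ∃ p q e : ℤ, (e = 1 ∨ e = 2) ∧ cen act z = spt p q e := by
  obtain ⟨ω, -, rfl⟩ := cs.exists_reduced_word' z
  induction ω with
  | nil => exact ⟨-1, -1, 2, Or.inr rfl, by rw [cs.wordProd_nil]; exact cen_one act⟩
  | cons i ω ih =>
    obtain ⟨p, q, e, he, hc⟩ := ih
    rw [cs.wordProd_cons]
    fin_cases i
    · exact ⟨-q-2, -p-2, 3-e, by omega, cm0 cs act h0 hc⟩
    · exact ⟨-p-1, p+q+e-1, 3-e, by omega, cm1 cs act h1 hc⟩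
    · exact ⟨p+q+e-1, -q-1, 3-e, by omega, cm2 cs act h2 hc⟩

include h0 h1 h2 in
lemma nN_le_len (hcen : Function.Injective (cen act)) :
    ∀ (ω : List (Fin 3)) (p q e : ℤ), (e = 1 ∨ e = 2) →
      cen act (cs.wordProd ω) = spt p q e → nN p q e ≤ ω.length := by
  intro ω
  induction ω with
  | nil =>
    intro p q e he h
    rw [cs.wordProd_nil, cen_one act] at h
    obtain ⟨rfl, rfl, rfl⟩ := spt_inj he (Or.inr rfl) h.symm
    simp [nN]
  | cons i ω ih =>
    intro p q e he h
    obtain ⟨p0, q0, e0, he0, hc0⟩ := coords_exists cs act h0 h1 h2 (cs.wordProd ω)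
    rw [cs.wordProd_cons] at h
    fin_cases i
    · have h' := cm0 cs act h0 hc0
      obtain ⟨rfl, rfl, rfl⟩ := spt_inj he (by omega) (h.symm.trans h')
      have := ih p0 q0 e0 he0 hc0
      simp only [List.length_cons, nN] at *
      omega
    · have h' := cm1 cs act h1 hc0
      obtain ⟨rfl, rfl, rfl⟩ := spt_inj he (by omega) (h.symm.trans h')
      have := ih p0 q0 e0 he0 hc0
      simp only [List.length_cons, nN] at *
      omega
    · have h' := cm2 cs act h2 hc0
      obtain ⟨rfl, rfl, rfl⟩ := spt_inj he (by omega) (h.symm.trans h')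
      have := ih p0 q0 e0 he0 hc0
      simp only [List.length_cons, nN] at *
      omega

include h0 h1 h2 in
lemma length_eq (hcen : Function.Injective (cen act)) :
    ∀ (N : ℕ) (z : W) (p q e : ℤ), nN p q e = N → (e = 1 ∨ e = 2) →
      cen act z = spt p q e → cs.length z = N := by
  intro N
  induction N using Nat.strong_induction_on with
  | _ N ihN =>
  intro z p q e hn he hc
  have hge : N ≤ cs.length z := by
    obtain ⟨ω, hω, hzω⟩ := cs.exists_reduced_word z
    rw [← hn, hzω, (hω : cs.length (cs.wordProd ω) = ω.length)]
    exact nN_le_len cs act h0 h1 h2 hcen ω p q e he (by rw [← hzω]; exact hc)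
  rcases Nat.eq_zero_or_pos N with rfl | hNpos
  · -- z = 1
    have hpqe : p = -1 ∧ q = -1 ∧ e = 2 := by simp only [nN] at hn; omega
    obtain ⟨rfl, rfl, rfl⟩ := hpqe
    have : z = 1 := hcen (by rw [hc, cen_one act])
    rw [this, cs.length_one]
  · -- pick a descent
    have hcase : (0 ≤ p) ∨ (0 ≤ q) ∨ (p + q + e ≤ -1) := by
      by_contra hcon
      push_neg at hcon
      simp only [nN] at hn
      omega
    rcases hcase with hp | hq | hr
    · -- use s1
      have hc' := cm1 cs act h1 hc
      have hn' : nN (-p-1) (p+q+e-1) (3-e) = N - 1 := by simp only [nN] at *; omega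
      have hl' := ihN (N-1) (by omega) _ _ _ _ hn' (by omega) hc'
      have hz : cs.simple 1 * (cs.simple 1 * z) = z := cs.simple_mul_simple_cancel_left 1
      have : cs.length z ≤ N := by
        calc cs.length z = cs.length (cs.simple 1 * (cs.simple 1 * z)) := by rw [hz]
        _ ≤ cs.length (cs.simple 1) + cs.length (cs.simple 1 * z) := cs.length_mul_le _ _
        _ = 1 + (N - 1) := by rw [cs.length_simple, hl']
        _ ≤ N := by omega
      omega
    · have hc' := cm2 cs act h2 hc
      have hn' : nN (p+q+e-1) (-q-1) (3-e) = N - 1 := by simp only [nN] at *; omega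
      have hl' := ihN (N-1) (by omega) _ _ _ _ hn' (by omega) hc'
      have hz : cs.simple 2 * (cs.simple 2 * z) = z := cs.simple_mul_simple_cancel_left 2
      have : cs.length z ≤ N := by
        calc cs.length z = cs.length (cs.simple 2 * (cs.simple 2 * z)) := by rw [hz]
        _ ≤ cs.length (cs.simple 2) + cs.length (cs.simple 2 * z) := cs.length_mul_le _ _
        _ = 1 + (N - 1) := by rw [cs.length_simple, hl']
        _ ≤ N := by omega
      omega
    · have hc' := cm0 cs act h0 hc
      have hn' : nN (-q-2) (-p-2) (3-e) = N - 1 := by simp only [nN] at *; omega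
      have hl' := ihN (N-1) (by omega) _ _ _ _ hn' (by omega) hc'
      have hz : cs.simple 0 * (cs.simple 0 * z) = z := cs.simple_mul_simple_cancel_left 0
      have : cs.length z ≤ N := by
        calc cs.length z = cs.length (cs.simple 0 * (cs.simple 0 * z)) := by rw [hz]
        _ ≤ cs.length (cs.simple 0) + cs.length (cs.simple 0 * z) := cs.length_mul_le _ _
        _ = 1 + (N - 1) := by rw [cs.length_simple, hl']
        _ ≤ N := by omega
      omega

end trans
end S1len
namespace S1refl
open S1geo S1len

/-! ### pointwise geometry of conjugation -/

lemma c11 (k : ℝ) (v : E2) : reflE a1 0 (reflE a1 k (reflE a1 0 v)) = reflE a1 (-k) v := by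
  obtain ⟨x, y⟩ := v
  simp only [reflE, B2, a1, a2, rho2, Prod.smul_mk, smul_eq_mul, Prod.mk_sub_mk, Prod.mk.injEq]
  constructor <;> ring

lemma c12 (k : ℝ) (v : E2) : reflE a1 0 (reflE a2 k (reflE a1 0 v)) = reflE rho2 k v := by
  obtain ⟨x, y⟩ := v
  simp only [reflE, B2, a1, a2, rho2, Prod.smul_mk, smul_eq_mul, Prod.mk_sub_mk, Prod.mk.injEq]
  constructor <;> ring

lemma c13 (k : ℝ) (v : E2) : reflE a1 0 (reflE rho2 k (reflE a1 0 v)) = reflE a2 k v := by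
  obtain ⟨x, y⟩ := v
  simp only [reflE, B2, a1, a2, rho2, Prod.smul_mk, smul_eq_mul, Prod.mk_sub_mk, Prod.mk.injEq]
  constructor <;> ring

lemma c21 (k : ℝ) (v : E2) : reflE a2 0 (reflE a1 k (reflE a2 0 v)) = reflE rho2 k v := by
  obtain ⟨x, y⟩ := v
  simp only [reflE, B2, a1, a2, rho2, Prod.smul_mk, smul_eq_mul, Prod.mk_sub_mk, Prod.mk.injEq]
  constructor <;> ring

lemma c22 (k : ℝ) (v : E2) : reflE a2 0 (reflE a2 k (reflE a2 0 v)) = reflE a2 (-k) v := by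
  obtain ⟨x, y⟩ := v
  simp only [reflE, B2, a1, a2, rho2, Prod.smul_mk, smul_eq_mul, Prod.mk_sub_mk, Prod.mk.injEq]
  constructor <;> ring

lemma c23 (k : ℝ) (v : E2) : reflE a2 0 (reflE rho2 k (reflE a2 0 v)) = reflE a1 k v := by
  obtain ⟨x, y⟩ := v
  simp only [reflE, B2, a1, a2, rho2, Prod.smul_mk, smul_eq_mul, Prod.mk_sub_mk, Prod.mk.injEq]
  constructor <;> ring

lemma c01 (k : ℝ) (v : E2) :
    reflE rho2 (-1) (reflE a1 k (reflE rho2 (-1) v)) = reflE a2 (-k-1) v := by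
  obtain ⟨x, y⟩ := v
  simp only [reflE, B2, a1, a2, rho2, Prod.smul_mk, smul_eq_mul, Prod.mk_sub_mk, Prod.mk.injEq]
  constructor <;> ring

lemma c02 (k : ℝ) (v : E2) :
    reflE rho2 (-1) (reflE a2 k (reflE rho2 (-1) v)) = reflE a1 (-k-1) v := by
  obtain ⟨x, y⟩ := v
  simp only [reflE, B2, a1, a2, rho2, Prod.smul_mk, smul_eq_mul, Prod.mk_sub_mk, Prod.mk.injEq]
  constructor <;> ring

lemma c03 (k : ℝ) (v : E2) :
    reflE rho2 (-1) (reflE rho2 k (reflE rho2 (-1) v)) = reflE rho2 (-2-k) v := by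
  obtain ⟨x, y⟩ := v
  simp only [reflE, B2, a1, a2, rho2, Prod.smul_mk, smul_eq_mul, Prod.mk_sub_mk, Prod.mk.injEq]
  constructor <;> ring

lemma reflE_conj_trans (a d : E2) (c : ℝ) (v : E2) :
    reflE a c (v - d) + d = reflE a (c + B2 a d) v := by
  obtain ⟨x, y⟩ := v
  obtain ⟨dx, dy⟩ := d
  obtain ⟨ax, ay⟩ := a
  simp only [reflE, B2, Prod.smul_mk, smul_eq_mul, Prod.mk_sub_mk, Prod.mk_add_mk, Prod.mk.injEq]
  constructor <;> ring

lemma transp1 (v : E2) : reflE a1 0 (reflE a1 (-1) v) = v + a1 := by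
  obtain ⟨x, y⟩ := v
  simp only [reflE, B2, a1, Prod.smul_mk, smul_eq_mul, Prod.mk_sub_mk, Prod.mk_add_mk, Prod.mk.injEq]
  constructor <;> ring

lemma transp2 (v : E2) : reflE a2 0 (reflE a2 (-1) v) = v + a2 := by
  obtain ⟨x, y⟩ := v
  simp only [reflE, B2, a2, Prod.smul_mk, smul_eq_mul, Prod.mk_sub_mk, Prod.mk_add_mk, Prod.mk.injEq]
  constructor <;> ring

lemma transpr (v : E2) : reflE rho2 0 (reflE rho2 (-1) v) = v + rho2 := by
  obtain ⟨x, y⟩ := v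
  simp only [reflE, B2, rho2, Prod.smul_mk, smul_eq_mul, Prod.mk_sub_mk, Prod.mk_add_mk, Prod.mk.injEq]
  constructor <;> ring

/-! ### the family of affine reflections -/

/-- `f` is the affine reflection in one of the lines `H_{α,k}`, `α ∈ Φ⁺`, `k ∈ ℤ`. -/
def RefFam (f : E2 → E2) : Prop :=
  ∃ k : ℤ, (∀ v, f v = reflE a1 (k : ℝ) v) ∨ (∀ v, f v = reflE a2 (k : ℝ) v) ∨
    (∀ v, f v = reflE rho2 (k : ℝ) v)

variable {W : Type*} [Group W] {M : CoxeterMatrix (Fin 3)} (cs : CoxeterSystem M W)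
variable (act : W →* Equiv.Perm E2)

lemma act_mul_apply (x y : W) (v : E2) : act (x * y) v = act x (act y v) := by
  rw [map_mul]; rfl

lemma act_inv_apply (x : W) {v w : E2} (h : act x w = v) : act x⁻¹ v = w := by
  rw [← h, ← act_mul_apply, inv_mul_cancel, map_one]; rfl

section hyp
variable (h0 : ∀ v, act (cs.simple 0) v = reflE rho2 (-1) v)
variable (h1 : ∀ v, act (cs.simple 1) v = reflE a1 0 v)
variable (h2 : ∀ v, act (cs.simple 2) v = reflE a2 0 v)

include h0 in
lemma refFam_conj0 (x : W) (h : RefFam (act x)) :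
    RefFam (act (cs.simple 0 * x * (cs.simple 0)⁻¹)) := by
  rw [cs.inv_simple]
  obtain ⟨k, hk | hk | hk⟩ := h
  · exact ⟨-k-1, Or.inr (Or.inl (fun v => by
      rw [act_mul_apply, act_mul_apply, h0, hk, h0]; push_cast; exact c01 k v))⟩
  · exact ⟨-k-1, Or.inl (fun v => by
      rw [act_mul_apply, act_mul_apply, h0, hk, h0]; push_cast; exact c02 k v)⟩
  · exact ⟨-2-k, Or.inr (Or.inr (fun v => by
      rw [act_mul_apply, act_mul_apply, h0, hk, h0]; push_cast; exact c03 k v))⟩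

include h1 in
lemma refFam_conj1 (x : W) (h : RefFam (act x)) :
    RefFam (act (cs.simple 1 * x * (cs.simple 1)⁻¹)) := by
  rw [cs.inv_simple]
  obtain ⟨k, hk | hk | hk⟩ := h
  · exact ⟨-k, Or.inl (fun v => by
      rw [act_mul_apply, act_mul_apply, h1, hk, h1]; push_cast; exact c11 k v)⟩
  · exact ⟨k, Or.inr (Or.inr (fun v => by
      rw [act_mul_apply, act_mul_apply, h1, hk, h1]; exact c12 k v))⟩
  · exact ⟨k, Or.inr (Or.inl (fun v => by
      rw [act_mul_apply, act_mul_apply, h1, hk, h1]; exact c13 k v))⟩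

include h2 in
lemma refFam_conj2 (x : W) (h : RefFam (act x)) :
    RefFam (act (cs.simple 2 * x * (cs.simple 2)⁻¹)) := by
  rw [cs.inv_simple]
  obtain ⟨k, hk | hk | hk⟩ := h
  · exact ⟨k, Or.inr (Or.inr (fun v => by
      rw [act_mul_apply, act_mul_apply, h2, hk, h2]; exact c21 k v))⟩
  · exact ⟨-k, Or.inr (Or.inl (fun v => by
      rw [act_mul_apply, act_mul_apply, h2, hk, h2]; push_cast; exact c22 k v))⟩
  · exact ⟨k, Or.inl (fun v => by
      rw [act_mul_apply, act_mul_apply, h2, hk, h2]; exact c23 k v)⟩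

include h0 h1 h2 in
lemma refFam_conj (i : Fin 3) (x : W) (h : RefFam (act x)) :
    RefFam (act (cs.simple i * x * (cs.simple i)⁻¹)) := by
  fin_cases i
  · exact refFam_conj0 cs act h0 x h
  · exact refFam_conj1 cs act h1 x h
  · exact refFam_conj2 cs act h2 x h

include h0 h1 h2 in
lemma refFam_simple (i : Fin 3) : RefFam (act (cs.simple i)) := by
  have e0 : RefFam (act (cs.simple 0)) :=
    ⟨-1, Or.inr (Or.inr (fun v => by rw [h0]; push_cast; norm_num))⟩
  have e1 : RefFam (act (cs.simple 1)) :=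
    ⟨0, Or.inl (fun v => by rw [h1]; push_cast; norm_num)⟩
  have e2 : RefFam (act (cs.simple 2)) :=
    ⟨0, Or.inr (Or.inl (fun v => by rw [h2]; push_cast; norm_num))⟩
  fin_cases i
  · exact e0
  · exact e1
  · exact e2

include h0 h1 h2 in
lemma refFam_of_isReflection {t : W} (ht : cs.IsReflection t) : RefFam (act t) := by
  obtain ⟨w, i, rfl⟩ := ht
  obtain ⟨ω, -, rfl⟩ := cs.exists_reduced_word' w
  induction ω with
  | nil =>
    rw [cs.wordProd_nil, one_mul, inv_one, mul_one]
    exact refFam_simple cs act h0 h1 h2 i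
  | cons j ω ih =>
    rw [cs.wordProd_cons]
    have : cs.simple j * cs.wordProd ω * cs.simple i * (cs.simple j * cs.wordProd ω)⁻¹ =
        cs.simple j * (cs.wordProd ω * cs.simple i * (cs.wordProd ω)⁻¹) * (cs.simple j)⁻¹ := by
      group
    rw [this]
    exact refFam_conj cs act h0 h1 h2 j _ ih

end hyp

/-! ### Bruhat cocover characterization -/

lemma bruhatLT_length {B : Type*} {W : Type*} [Group W] {M : CoxeterMatrix B}
    (cs : CoxeterSystem M W) {x y : W} (h : bruhatLT cs x y) : cs.length x < cs.length y := by
  induction h with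
  | single h => exact h.2
  | tail _ h ih => exact lt_trans ih h.2

lemma lset_mem_iff {B : Type*} {W : Type*} [Group W] {M : CoxeterMatrix B}
    (cs : CoxeterSystem M W) (y w : W) :
    w ∈ Lset cs y ↔ (∃ t, cs.IsReflection t ∧ w = t * y) ∧ cs.length y = cs.length w + 1 := by
  constructor
  · rintro ⟨hlt, hlen⟩
    refine ⟨?_, hlen⟩
    cases hlt with
    | single h =>
      obtain ⟨⟨t, ht, hy⟩, -⟩ := h
      exact ⟨t, ht, by rw [hy, ← mul_assoc, ht.mul_self, one_mul]⟩
    | tail h1 h2 =>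
      exfalso
      have l1 := bruhatLT_length cs h1
      have l2 := h2.2
      omega
  · rintro ⟨⟨t, ht, rfl⟩, hlen⟩
    refine ⟨Relation.TransGen.single ⟨⟨t, ht, ?_⟩, by omega⟩, hlen⟩
    rw [← mul_assoc, ht.mul_self, one_mul]

end S1refl
namespace S1constr
open S1geo S1len S1refl

variable {W : Type*} [Group W] {M : CoxeterMatrix (Fin 3)} (cs : CoxeterSystem M W)

/-- translation by `α₁` -/
def tr1 : W := cs.simple 1 * (cs.simple 2 * cs.simple 0 * cs.simple 2)
/-- translation by `α₂` -/
def tr2 : W := cs.simple 2 * (cs.simple 1 * cs.simple 0 * cs.simple 1)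
/-- translation by `ρ` -/
def trr : W := cs.simple 1 * cs.simple 2 * cs.simple 1 * cs.simple 0

/-- the reflection `s_{α₁,k}` -/
def rf1 (k : ℤ) : W :=
  if Even k then tr1 cs ^ (k/2) * cs.simple 1 * (tr1 cs ^ (k/2))⁻¹
  else tr1 cs ^ ((k+1)/2) * (cs.simple 2 * cs.simple 0 * cs.simple 2) * (tr1 cs ^ ((k+1)/2))⁻¹

/-- the reflection `s_{α₂,k}` -/
def rf2 (k : ℤ) : W :=
  if Even k then tr2 cs ^ (k/2) * cs.simple 2 * (tr2 cs ^ (k/2))⁻¹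
  else tr2 cs ^ ((k+1)/2) * (cs.simple 1 * cs.simple 0 * cs.simple 1) * (tr2 cs ^ ((k+1)/2))⁻¹

/-- the reflection `s_{ρ,k}` -/
def rfr (k : ℤ) : W :=
  if Even k then trr cs ^ (k/2) * (cs.simple 1 * cs.simple 2 * cs.simple 1) * (trr cs ^ (k/2))⁻¹
  else trr cs ^ ((k+1)/2) * cs.simple 0 * (trr cs ^ ((k+1)/2))⁻¹

lemma isRefl_s2s0s2 : cs.IsReflection (cs.simple 2 * cs.simple 0 * cs.simple 2) := by
  have := (cs.isReflection_simple 0).conj (cs.simple 2)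
  rwa [cs.inv_simple] at this

lemma isRefl_s1s0s1 : cs.IsReflection (cs.simple 1 * cs.simple 0 * cs.simple 1) := by
  have := (cs.isReflection_simple 0).conj (cs.simple 1)
  rwa [cs.inv_simple] at this

lemma isRefl_s1s2s1 : cs.IsReflection (cs.simple 1 * cs.simple 2 * cs.simple 1) := by
  have := (cs.isReflection_simple 2).conj (cs.simple 1)
  rwa [cs.inv_simple] at this

lemma isRefl_rf1 (k : ℤ) : cs.IsReflection (rf1 cs k) := by
  rw [rf1]
  split
  · exact (cs.isReflection_simple 1).conj _
  · exact (isRefl_s2s0s2 cs).conj _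

lemma isRefl_rf2 (k : ℤ) : cs.IsReflection (rf2 cs k) := by
  rw [rf2]
  split
  · exact (cs.isReflection_simple 2).conj _
  · exact (isRefl_s1s0s1 cs).conj _

lemma isRefl_rfr (k : ℤ) : cs.IsReflection (rfr cs k) := by
  rw [rfr]
  split
  · exact (isRefl_s1s2s1 cs).conj _
  · exact (cs.isReflection_simple 0).conj _

variable (act : W →* Equiv.Perm E2)
variable (h0 : ∀ v, act (cs.simple 0) v = reflE rho2 (-1) v)
variable (h1 : ∀ v, act (cs.simple 1) v = reflE a1 0 v)
variable (h2 : ∀ v, act (cs.simple 2) v = reflE a2 0 v)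

include h0 h2 in
lemma act_s2s0s2 : ∀ v, act (cs.simple 2 * cs.simple 0 * cs.simple 2) v = reflE a1 (-1) v := by
  intro v
  rw [act_mul_apply, act_mul_apply, h2, h0, h2]
  exact c23 (-1) v

include h0 h1 in
lemma act_s1s0s1 : ∀ v, act (cs.simple 1 * cs.simple 0 * cs.simple 1) v = reflE a2 (-1) v := by
  intro v
  rw [act_mul_apply, act_mul_apply, h1, h0, h1]
  exact c13 (-1) v

include h1 h2 in
lemma act_s1s2s1 : ∀ v, act (cs.simple 1 * cs.simple 2 * cs.simple 1) v = reflE rho2 0 v := by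
  intro v
  rw [act_mul_apply, act_mul_apply, h1, h2, h1]
  exact c12 0 v

include h0 h1 h2 in
lemma act_tr1 : ∀ v, act (tr1 cs) v = v + a1 := by
  intro v
  rw [tr1, act_mul_apply, act_s2s0s2 cs act h0 h2, h1]
  exact transp1 v

include h0 h1 h2 in
lemma act_tr2 : ∀ v, act (tr2 cs) v = v + a2 := by
  intro v
  rw [tr2, act_mul_apply, act_s1s0s1 cs act h0 h1, h2]
  exact transp2 v

include h0 h1 h2 in
lemma act_trr : ∀ v, act (trr cs) v = v + rho2 := by
  intro v
  rw [trr, act_mul_apply, h0, act_s1s2s1 cs act h1 h2]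
  exact transpr v

lemma act_zpow_translate (x : W) (d : E2) (hx : ∀ v, act x v = v + d) :
    ∀ (j : ℤ) (v : E2), act (x ^ j) v = v + (j : ℝ) • d := by
  have hinv : ∀ v, act x⁻¹ v = v - d := by
    intro v
    exact act_inv_apply act x (by rw [hx]; abel)
  intro j
  induction j using Int.induction_on with
  | zero => intro v; simp
  | succ j ih =>
    intro v
    have : x ^ ((j : ℤ) + 1) = x ^ (j : ℤ) * x := by rw [zpow_add_one]
    rw [this, act_mul_apply, hx, ih]
    push_cast
    rw [add_smul, one_smul]
    abel
  | pred j ih =>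
    intro v
    have : x ^ (-(j : ℤ) - 1) = x ^ (-(j : ℤ)) * x⁻¹ := by rw [zpow_sub_one]
    rw [this, act_mul_apply, hinv, ih]
    push_cast
    rw [sub_smul, one_smul]
    abel

lemma act_conj_refl (y b : W) (a' : E2) (c : ℝ) (d : E2)
    (hy : ∀ v, act y v = v + d) (hb : ∀ v, act b v = reflE a' c v) (v : E2) :
    act (y * b * y⁻¹) v = reflE a' (c + B2 a' d) v := by
  have hinv : act y⁻¹ v = v - d := act_inv_apply act y (by rw [hy]; abel)
  rw [act_mul_apply, act_mul_apply, hinv, hb, hy]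
  exact reflE_conj_trans a' d c v

lemma B2_smul_a1 (j : ℝ) : B2 a1 (j • a1) = 2 * j := by
  simp only [B2, a1, Prod.smul_mk, smul_eq_mul]; ring

lemma B2_smul_a2 (j : ℝ) : B2 a2 (j • a2) = 2 * j := by
  simp only [B2, a2, Prod.smul_mk, smul_eq_mul]; ring

lemma B2_smul_rho2 (j : ℝ) : B2 rho2 (j • rho2) = 2 * j := by
  simp only [B2, rho2, Prod.smul_mk, smul_eq_mul]; ring

lemma cast_even {k : ℤ} (h : Even k) : (0:ℝ) + 2 * ((k/2 : ℤ) : ℝ) = (k:ℝ) := by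
  have h2 : (2 * (k/2) : ℤ) = k := Int.two_mul_ediv_two_of_even h
  have : ((2 * (k/2) : ℤ) : ℝ) = (k : ℝ) := by exact_mod_cast congrArg (fun z : ℤ => (z:ℝ)) h2
  push_cast at this
  linarith

lemma cast_odd {k : ℤ} (h : ¬ Even k) : (-1:ℝ) + 2 * (((k+1)/2 : ℤ) : ℝ) = (k:ℝ) := by
  have hev : Even (k+1) := by
    rcases Int.even_or_odd k with he | ho
    · exact absurd he h
    · exact Odd.add_one ho
  have h2 : (2 * ((k+1)/2) : ℤ) = k+1 := Int.two_mul_ediv_two_of_even hev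
  have : ((2 * ((k+1)/2) : ℤ) : ℝ) = ((k+1 : ℤ) : ℝ) := by
    exact_mod_cast congrArg (fun z : ℤ => (z:ℝ)) h2
  push_cast at this
  linarith

include h0 h1 h2 in
lemma act_rf1 (k : ℤ) : ∀ v, act (rf1 cs k) v = reflE a1 (k : ℝ) v := by
  intro v
  rw [rf1]
  split
  · rename_i hev
    rw [act_conj_refl act (tr1 cs ^ (k/2)) (cs.simple 1) a1 0 (((k/2 : ℤ) : ℝ) • a1)
      (act_zpow_translate act _ _ (act_tr1 cs act h0 h1 h2) (k/2)) h1 v,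
      B2_smul_a1, cast_even hev]
  · rename_i hodd
    rw [act_conj_refl act (tr1 cs ^ ((k+1)/2)) _ a1 (-1) ((((k+1)/2 : ℤ) : ℝ) • a1)
      (act_zpow_translate act _ _ (act_tr1 cs act h0 h1 h2) ((k+1)/2))
      (act_s2s0s2 cs act h0 h2) v,
      B2_smul_a1, cast_odd hodd]

include h0 h1 h2 in
lemma act_rf2 (k : ℤ) : ∀ v, act (rf2 cs k) v = reflE a2 (k : ℝ) v := by
  intro v
  rw [rf2]
  split
  · rename_i hev
    rw [act_conj_refl act (tr2 cs ^ (k/2)) (cs.simple 2) a2 0 (((k/2 : ℤ) : ℝ) • a2)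
      (act_zpow_translate act _ _ (act_tr2 cs act h0 h1 h2) (k/2)) h2 v,
      B2_smul_a2, cast_even hev]
  · rename_i hodd
    rw [act_conj_refl act (tr2 cs ^ ((k+1)/2)) _ a2 (-1) ((((k+1)/2 : ℤ) : ℝ) • a2)
      (act_zpow_translate act _ _ (act_tr2 cs act h0 h1 h2) ((k+1)/2))
      (act_s1s0s1 cs act h0 h1) v,
      B2_smul_a2, cast_odd hodd]

include h0 h1 h2 in
lemma act_rfr (k : ℤ) : ∀ v, act (rfr cs k) v = reflE rho2 (k : ℝ) v := by
  intro v
  rw [rfr]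
  split
  · rename_i hev
    rw [act_conj_refl act (trr cs ^ (k/2)) _ rho2 0 (((k/2 : ℤ) : ℝ) • rho2)
      (act_zpow_translate act _ _ (act_trr cs act h0 h1 h2) (k/2))
      (act_s1s2s1 cs act h1 h2) v,
      B2_smul_rho2, cast_even hev]
  · rename_i hodd
    rw [act_conj_refl act (trr cs ^ ((k+1)/2)) _ rho2 (-1) ((((k+1)/2 : ℤ) : ℝ) • rho2)
      (act_zpow_translate act _ _ (act_trr cs act h0 h1 h2) ((k+1)/2))
      h0 v,
      B2_smul_rho2, cast_odd hodd]

end S1constr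
namespace S1main
open S1geo S1len S1refl S1constr

lemma spt_congr {p q e p' q' e' : ℤ} (hp : p = p') (hq : q = q') (he : e = e') :
    spt p q e = spt p' q' e' := by subst hp; subst hq; subst he; rfl

variable {W : Type*} [Group W] {M : CoxeterMatrix (Fin 3)} (cs : CoxeterSystem M W)
variable (act : W →* Equiv.Perm E2)
variable (h0 : ∀ v, act (cs.simple 0) v = reflE rho2 (-1) v)
variable (h1 : ∀ v, act (cs.simple 1) v = reflE a1 0 v)
variable (h2 : ∀ v, act (cs.simple 2) v = reflE a2 0 v)
variable (hcen : Function.Injective (cen act))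
variable (th ths : ℕ → ℕ → W)
variable (hth : ∀ m n : ℕ, cen act (th m n) =
      cen act (cs.simple 1 * cs.simple 2 * cs.simple 1) + (m : ℝ) • fw1 + (n : ℝ) • fw2)
variable (hths : ∀ m n : ℕ, cen act (ths m n) =
      cen act 1 + ((m : ℝ) + 1) • fw1 + ((n : ℝ) + 1) • fw2)

/-- cen of `t * z` for `t` acting as `s_{α₁,k}` -/
lemma cenm1 {t : W} {k : ℤ} (hk : ∀ v, act t v = reflE a1 (k : ℝ) v) {z : W} {p q e : ℤ}
    (hc : cen act z = spt p q e) :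
    cen act (t * z) = spt (2*k-p-1) (p+q-k+e-1) (3-e) := by
  rw [cen_mul, hc, hk, reflE_a1_spt]

lemma cenm2 {t : W} {k : ℤ} (hk : ∀ v, act t v = reflE a2 (k : ℝ) v) {z : W} {p q e : ℤ}
    (hc : cen act z = spt p q e) :
    cen act (t * z) = spt (p+q-k+e-1) (2*k-q-1) (3-e) := by
  rw [cen_mul, hc, hk, reflE_a2_spt]

lemma cenmr {t : W} {k : ℤ} (hk : ∀ v, act t v = reflE rho2 (k : ℝ) v) {z : W} {p q e : ℤ}
    (hc : cen act z = spt p q e) :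
    cen act (t * z) = spt (k-q-1) (k-p-1) (3-e) := by
  rw [cen_mul, hc, hk, reflE_r_spt]

include h0 h1 h2 in
lemma lenc {z : W} {p q e : ℤ} (he : e = 1 ∨ e = 2) (hc : cen act z = spt p q e)
    (hcen : Function.Injective (cen act)) : cs.length z = nN p q e :=
  length_eq cs act h0 h1 h2 hcen _ z p q e rfl he hc

include hth in
lemma cth (m n : ℕ) (hc3 : cen act (cs.simple 1 * cs.simple 2 * cs.simple 1) = spt 0 0 1) :
    cen act (th m n) = spt (m : ℤ) (n : ℤ) 1 := by
  rw [hth m n, hc3]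
  have e1 : ((m : ℕ) : ℝ) = (((m : ℕ) : ℤ) : ℝ) := by push_cast; rfl
  have e2 : ((n : ℕ) : ℝ) = (((n : ℕ) : ℤ) : ℝ) := by push_cast; rfl
  rw [e1, e2, spt_shift]
  exact spt_congr (by ring) (by ring) rfl

include h1 h2 in
lemma cw0 : cen act (cs.simple 1 * cs.simple 2 * cs.simple 1) = spt 0 0 1 := by
  have : cen act (cs.simple 1 * cs.simple 2 * cs.simple 1)
      = act (cs.simple 1 * cs.simple 2 * cs.simple 1) (cen act 1) := by
    rw [← cen_mul, mul_one]
  rw [this, act_s1s2s1 cs act h1 h2, cen_one]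
  have := reflE_r_spt 0 (-1) (-1) 2
  push_cast at this
  rw [this]

include hths in
lemma cths (m n : ℕ) : cen act (ths m n) = spt (m : ℤ) (n : ℤ) 2 := by
  rw [hths m n, cen_one]
  have e1 : ((m : ℕ) : ℝ) + 1 = (((m+1 : ℕ) : ℤ) : ℝ) := by push_cast; ring
  have e2 : ((n : ℕ) : ℝ) + 1 = (((n+1 : ℕ) : ℤ) : ℝ) := by push_cast; ring
  rw [e1, e2, spt_shift]
  exact spt_congr (by push_cast; ring) (by push_cast; ring) rfl

lemma mem_lset {y w t : W} (ht : cs.IsReflection t) (hw : w = t * y)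
    (hlen : cs.length y = cs.length w + 1) : w ∈ Lset cs y :=
  (lset_mem_iff cs y w).2 ⟨⟨t, ht, hw⟩, hlen⟩

end S1main
namespace S1main
open S1geo S1len S1refl S1constr

variable {W : Type*} [Group W] {M : CoxeterMatrix (Fin 3)} (cs : CoxeterSystem M W)
variable (act : W →* Equiv.Perm E2)
variable (h0 : ∀ v, act (cs.simple 0) v = reflE rho2 (-1) v)
variable (h1 : ∀ v, act (cs.simple 1) v = reflE a1 0 v)
variable (h2 : ∀ v, act (cs.simple 2) v = reflE a2 0 v)
variable (th ths : ℕ → ℕ → W)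
variable (hth : ∀ m n : ℕ, cen act (th m n) =
      cen act (cs.simple 1 * cs.simple 2 * cs.simple 1) + (m : ℝ) • fw1 + (n : ℝ) • fw2)
variable (hths : ∀ m n : ℕ, cen act (ths m n) =
      cen act 1 + ((m : ℝ) + 1) • fw1 + ((n : ℝ) + 1) • fw2)

include h0 h1 h2 hth hths in
lemma Lth1 (hcen : Function.Injective (cen act)) (m n : ℕ) :
    Lset cs (th m n) =
      ({cs.simple 1 * th m n, cs.simple 2 * th m n} : Set W) ∪
      {w | (∃ m', m = m' + 1 ∧ w = ths m' n) ∨ (∃ n', n = n' + 1 ∧ w = ths m n')} := by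
  have cy : cen act (th m n) = spt (m : ℤ) (n : ℤ) 1 :=
    cth cs act th hth m n (cw0 cs act h1 h2)
  have ly : cs.length (th m n) = nN (m : ℤ) (n : ℤ) 1 :=
    lenc cs act h0 h1 h2 (Or.inl rfl) cy hcen
  have c1 : cen act (cs.simple 1 * th m n) = spt (-(m:ℤ)-1) ((m:ℤ)+(n:ℤ)+1-1) (3-1) :=
    cm1 cs act h1 cy
  have l1 : cs.length (cs.simple 1 * th m n) = nN (-(m:ℤ)-1) ((m:ℤ)+(n:ℤ)+1-1) (3-1) :=
    lenc cs act h0 h1 h2 (by norm_num) c1 hcen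
  have c2 : cen act (cs.simple 2 * th m n) = spt ((m:ℤ)+(n:ℤ)+1-1) (-(n:ℤ)-1) (3-1) :=
    cm2 cs act h2 cy
  have l2 : cs.length (cs.simple 2 * th m n) = nN ((m:ℤ)+(n:ℤ)+1-1) (-(n:ℤ)-1) (3-1) :=
    lenc cs act h0 h1 h2 (by norm_num) c2 hcen
  ext w
  simp only [Set.mem_union, Set.mem_insert_iff, Set.mem_singleton_iff, Set.mem_setOf_eq]
  constructor
  · intro hw
    obtain ⟨⟨t, ht, rfl⟩, hlen⟩ := (lset_mem_iff cs _ _).1 hw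
    obtain ⟨k, hk | hk | hk⟩ := refFam_of_isReflection cs act h0 h1 h2 ht
    · -- α₁ type
      have cw : cen act (t * th m n) = spt (2*k-(m:ℤ)-1) ((m:ℤ)+(n:ℤ)-k+1-1) (3-1) :=
        cenm1 act hk cy
      have lw := lenc cs act h0 h1 h2 (by norm_num) cw hcen
      rw [ly, lw] at hlen
      have hcase : k = 0 ∨ (k = (m:ℤ) ∧ 1 ≤ m) := by simp only [nN] at hlen; omega
      rcases hcase with rfl | ⟨rfl, hm⟩
      · exact Or.inl (Or.inl (hcen (by
          rw [cw, c1]; exact spt_congr (by ring) (by ring) rfl)))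
      · refine Or.inr (Or.inl ⟨m - 1, by omega, hcen (by
          rw [cw, cths act ths hths (m-1) n]
          exact spt_congr (by omega) (by omega) (by norm_num))⟩)
    · -- α₂ type
      have cw : cen act (t * th m n) = spt ((m:ℤ)+(n:ℤ)-k+1-1) (2*k-(n:ℤ)-1) (3-1) :=
        cenm2 act hk cy
      have lw := lenc cs act h0 h1 h2 (by norm_num) cw hcen
      rw [ly, lw] at hlen
      have hcase : k = 0 ∨ (k = (n:ℤ) ∧ 1 ≤ n) := by simp only [nN] at hlen; omega
      rcases hcase with rfl | ⟨rfl, hn⟩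
      · exact Or.inl (Or.inr (hcen (by
          rw [cw, c2]; exact spt_congr (by ring) (by ring) rfl)))
      · refine Or.inr (Or.inr ⟨n - 1, by omega, hcen (by
          rw [cw, cths act ths hths m (n-1)]
          exact spt_congr (by omega) (by omega) (by norm_num))⟩)
    · -- ρ type : impossible
      have cw : cen act (t * th m n) = spt (k-(n:ℤ)-1) (k-(m:ℤ)-1) (3-1) :=
        cenmr act hk cy
      have lw := lenc cs act h0 h1 h2 (by norm_num) cw hcen
      rw [ly, lw] at hlen
      exfalso
      simp only [nN] at hlen
      omega
  · intro hw
    rcases hw with (rfl | rfl) | ⟨m', hm, rfl⟩ | ⟨n', hn, rfl⟩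
    · exact mem_lset cs (cs.isReflection_simple 1) rfl (by rw [ly, l1]; simp only [nN]; omega)
    · exact mem_lset cs (cs.isReflection_simple 2) rfl (by rw [ly, l2]; simp only [nN]; omega)
    · refine mem_lset cs (isRefl_rf1 cs (m:ℤ)) (hcen (by
        rw [cths act ths hths m' n,
          cenm1 act (act_rf1 cs act h0 h1 h2 (m:ℤ)) cy]
        exact spt_congr (by omega) (by omega) (by norm_num))) ?_
      rw [ly, lenc cs act h0 h1 h2 (Or.inr rfl) (cths act ths hths m' n) hcen]
      simp only [nN]; omega
    · refine mem_lset cs (isRefl_rf2 cs (n:ℤ)) (hcen (by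
        rw [cths act ths hths m n',
          cenm2 act (act_rf2 cs act h0 h1 h2 (n:ℤ)) cy]
        exact spt_congr (by omega) (by omega) (by norm_num))) ?_
      rw [ly, lenc cs act h0 h1 h2 (Or.inr rfl) (cths act ths hths m n') hcen]
      simp only [nN]; omega

end S1main
namespace S1main
open S1geo S1len S1refl S1constr

variable {W : Type*} [Group W] {M : CoxeterMatrix (Fin 3)} (cs : CoxeterSystem M W)
variable (act : W →* Equiv.Perm E2)
variable (h0 : ∀ v, act (cs.simple 0) v = reflE rho2 (-1) v)
variable (h1 : ∀ v, act (cs.simple 1) v = reflE a1 0 v)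
variable (h2 : ∀ v, act (cs.simple 2) v = reflE a2 0 v)
variable (th ths : ℕ → ℕ → W)
variable (hth : ∀ m n : ℕ, cen act (th m n) =
      cen act (cs.simple 1 * cs.simple 2 * cs.simple 1) + (m : ℝ) • fw1 + (n : ℝ) • fw2)
variable (hths : ∀ m n : ℕ, cen act (ths m n) =
      cen act 1 + ((m : ℝ) + 1) • fw1 + ((n : ℝ) + 1) • fw2)

include h0 h1 h2 hth hths in
lemma Lth2 (hcen : Function.Injective (cen act)) (m n : ℕ) :
    Disjoint ({cs.simple 1 * th m n, cs.simple 2 * th m n} : Set W)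
      {w | (∃ m', m = m' + 1 ∧ w = ths m' n) ∨ (∃ n', n = n' + 1 ∧ w = ths m n')} := by
  have cy : cen act (th m n) = spt (m : ℤ) (n : ℤ) 1 :=
    cth cs act th hth m n (cw0 cs act h1 h2)
  have c1 := cm1 cs act h1 cy
  have c2 := cm2 cs act h2 cy
  rw [Set.disjoint_left]
  rintro w (rfl | rfl) (⟨m', hm, h⟩ | ⟨n', hn, h⟩) <;>
    [skip; skip; skip; skip] <;>
    first
    | (have hc := congrArg (cen act) h
       rw [c1, cths act ths hths] at hc
       have := spt_inj (by norm_num) (by norm_num) hc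
       omega)
    | (have hc := congrArg (cen act) h
       rw [c2, cths act ths hths] at hc
       have := spt_inj (by norm_num) (by norm_num) hc
       omega)

include h0 h1 h2 hth hths in
lemma Lth3 (hcen : Function.Injective (cen act)) (m n : ℕ) :
    Lset cs (th m n) ∩ Dset th ths =
      {w | (∃ m', m = m' + 1 ∧ w = ths m' n) ∨ (∃ n', n = n' + 1 ∧ w = ths m n')} := by
  have cy : cen act (th m n) = spt (m : ℤ) (n : ℤ) 1 :=
    cth cs act th hth m n (cw0 cs act h1 h2)
  have c1 := cm1 cs act h1 cy
  have c2 := cm2 cs act h2 cy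
  ext w
  simp only [Set.mem_inter_iff, Set.mem_setOf_eq]
  constructor
  · rintro ⟨hl, hd⟩
    rw [Lth1 cs act h0 h1 h2 th ths hth hths hcen m n] at hl
    rcases hl with hl | hl
    · exfalso
      simp only [Set.mem_insert_iff, Set.mem_singleton_iff] at hl
      rcases hd with ⟨a, b, hab⟩ | ⟨a, b, hab⟩ <;> rcases hl with rfl | rfl <;>
        [skip; skip; skip; skip] <;>
        first
        | (have hc := congrArg (cen act) hab
           rw [c1, cth cs act th hth a b (cw0 cs act h1 h2)] at hc
           have := spt_inj (by norm_num) (by norm_num) hc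
           omega)
        | (have hc := congrArg (cen act) hab
           rw [c2, cth cs act th hth a b (cw0 cs act h1 h2)] at hc
           have := spt_inj (by norm_num) (by norm_num) hc
           omega)
        | (have hc := congrArg (cen act) hab
           rw [c1, cths act ths hths] at hc
           have := spt_inj (by norm_num) (by norm_num) hc
           omega)
        | (have hc := congrArg (cen act) hab
           rw [c2, cths act ths hths] at hc
           have := spt_inj (by norm_num) (by norm_num) hc
           omega)
    · exact hl
  · intro hb
    refine ⟨by
      rw [Lth1 cs act h0 h1 h2 th ths hth hths hcen m n]
      exact Or.inr hb, ?_⟩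
    rcases hb with ⟨m', hm, rfl⟩ | ⟨n', hn, rfl⟩
    · exact Or.inr ⟨m', n, rfl⟩
    · exact Or.inr ⟨m, n', rfl⟩

include h0 h1 h2 hth hths in
lemma Lth4 (hcen : Function.Injective (cen act)) (m n : ℕ) :
    Lset cs (cs.simple 0 * th m n) =
      (fun w => cs.simple 0 * w) '' Lset cs (th m n) ∪ {th m n} := by
  have cy : cen act (th m n) = spt (m : ℤ) (n : ℤ) 1 :=
    cth cs act th hth m n (cw0 cs act h1 h2)
  have ly : cs.length (th m n) = nN (m : ℤ) (n : ℤ) 1 :=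
    lenc cs act h0 h1 h2 (Or.inl rfl) cy hcen
  have c0y := cm0 cs act h0 cy
  have l0y := lenc cs act h0 h1 h2 (by norm_num) c0y hcen
  have c1 := cm1 cs act h1 cy
  have c2 := cm2 cs act h2 cy
  ext w
  simp only [Set.mem_union, Set.mem_image, Set.mem_singleton_iff]
  constructor
  · intro hw
    obtain ⟨⟨t, ht, rfl⟩, hlen⟩ := (lset_mem_iff cs _ _).1 hw
    obtain ⟨k, hk | hk | hk⟩ := refFam_of_isReflection cs act h0 h1 h2 ht
    · -- α₁ type : k = -1 (↦ s₀s₂y) or k = -n-1 (↦ s₀·ths m (n-1))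
      have cw := cenm1 act hk c0y
      have lw := lenc cs act h0 h1 h2 (by norm_num) cw hcen
      rw [l0y, lw] at hlen
      have hcase : k = -1 ∨ (k = -(n:ℤ)-1 ∧ 1 ≤ n) := by simp only [nN] at hlen; omega
      rcases hcase with rfl | ⟨rfl, hn⟩
      · refine Or.inl ⟨cs.simple 2 * th m n, ?_, ?_⟩
        · rw [Lth1 cs act h0 h1 h2 th ths hth hths hcen m n]
          exact Or.inl (Or.inr rfl)
        · exact (hcen (cw.trans ((cm0 cs act h0 c2).trans
            (spt_congr (by ring) (by ring) (by ring))).symm)).symm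
      · refine Or.inl ⟨ths m (n-1), ?_, ?_⟩
        · rw [Lth1 cs act h0 h1 h2 th ths hth hths hcen m n]
          exact Or.inr (Or.inr ⟨n-1, by omega, rfl⟩)
        · exact (hcen (cw.trans ((cm0 cs act h0 (cths act ths hths m (n-1))).trans
            (spt_congr (by omega) (by omega) (by omega))).symm)).symm
    · -- α₂ type : k = -1 (↦ s₀s₁y) or k = -m-1 (↦ s₀·ths (m-1) n)
      have cw := cenm2 act hk c0y
      have lw := lenc cs act h0 h1 h2 (by norm_num) cw hcen
      rw [l0y, lw] at hlen
      have hcase : k = -1 ∨ (k = -(m:ℤ)-1 ∧ 1 ≤ m) := by simp only [nN] at hlen; omega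
      rcases hcase with rfl | ⟨rfl, hm⟩
      · refine Or.inl ⟨cs.simple 1 * th m n, ?_, ?_⟩
        · rw [Lth1 cs act h0 h1 h2 th ths hth hths hcen m n]
          exact Or.inl (Or.inl rfl)
        · exact (hcen (cw.trans ((cm0 cs act h0 c1).trans
            (spt_congr (by ring) (by ring) (by ring))).symm)).symm
      · refine Or.inl ⟨ths (m-1) n, ?_, ?_⟩
        · rw [Lth1 cs act h0 h1 h2 th ths hth hths hcen m n]
          exact Or.inr (Or.inl ⟨m-1, by omega, rfl⟩)
        · exact (hcen (cw.trans ((cm0 cs act h0 (cths act ths hths (m-1) n)).trans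
            (spt_congr (by omega) (by omega) (by omega))).symm)).symm
    · -- ρ type : k = -1 (↦ y)
      have cw := cenmr act hk c0y
      have lw := lenc cs act h0 h1 h2 (by norm_num) cw hcen
      rw [l0y, lw] at hlen
      have hcase : k = -1 := by simp only [nN] at hlen; omega
      subst hcase
      exact Or.inr (hcen (cw.trans (cy.trans (spt_congr (by ring) (by ring) (by ring))).symm))
  · intro hw
    rcases hw with ⟨u, hu, rfl⟩ | rfl
    · obtain ⟨⟨t, ht, hueq⟩, hlu⟩ := (lset_mem_iff cs _ _).1 hu
      have ht' := ht.conj (cs.simple 0)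
      have heq : cs.simple 0 * u =
          (cs.simple 0 * t * (cs.simple 0)⁻¹) * (cs.simple 0 * th m n) := by
        rw [hueq]; group
      refine mem_lset cs ht' heq ?_
      rw [Lth1 cs act h0 h1 h2 th ths hth hths hcen m n] at hu
      rcases hu with (rfl | rfl) | ⟨m', hm, rfl⟩ | ⟨n', hn, rfl⟩
      · rw [l0y, lenc cs act h0 h1 h2 (by norm_num) (cm0 cs act h0 c1) hcen]
        simp only [nN]; omega
      · rw [l0y, lenc cs act h0 h1 h2 (by norm_num) (cm0 cs act h0 c2) hcen]
        simp only [nN]; omega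
      · rw [l0y, lenc cs act h0 h1 h2 (by norm_num)
          (cm0 cs act h0 (cths act ths hths m' n)) hcen]
        simp only [nN]; omega
      · rw [l0y, lenc cs act h0 h1 h2 (by norm_num)
          (cm0 cs act h0 (cths act ths hths m n')) hcen]
        simp only [nN]; omega
    · refine mem_lset cs (cs.isReflection_simple 0)
        (cs.simple_mul_simple_cancel_left 0).symm ?_
      rw [l0y, ly]; simp only [nN]; omega

include h0 h1 h2 hth hths in
lemma Lth5 (hcen : Function.Injective (cen act)) (m n : ℕ) :
    th m n ∉ (fun w => cs.simple 0 * w) '' Lset cs (th m n) := by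
  have cy : cen act (th m n) = spt (m : ℤ) (n : ℤ) 1 :=
    cth cs act th hth m n (cw0 cs act h1 h2)
  have ly : cs.length (th m n) = nN (m : ℤ) (n : ℤ) 1 :=
    lenc cs act h0 h1 h2 (Or.inl rfl) cy hcen
  have c0y := cm0 cs act h0 cy
  have l0y := lenc cs act h0 h1 h2 (by norm_num) c0y hcen
  rintro ⟨u, hu, heq⟩
  have hu' : u = cs.simple 0 * th m n := by
    have := congrArg (fun x => cs.simple 0 * x) heq
    simp only at this
    rw [cs.simple_mul_simple_cancel_left] at this
    rw [this]
  subst hu'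
  have := ((lset_mem_iff cs _ _).1 hu).2
  rw [ly, l0y] at this
  simp only [nN] at this
  omega

end S1main
namespace S1main
open S1geo S1len S1refl S1constr

variable {W : Type*} [Group W] {M : CoxeterMatrix (Fin 3)} (cs : CoxeterSystem M W)
variable (act : W →* Equiv.Perm E2)
variable (h0 : ∀ v, act (cs.simple 0) v = reflE rho2 (-1) v)
variable (h1 : ∀ v, act (cs.simple 1) v = reflE a1 0 v)
variable (h2 : ∀ v, act (cs.simple 2) v = reflE a2 0 v)
variable (th ths : ℕ → ℕ → W)
variable (hth : ∀ m n : ℕ, cen act (th m n) =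
      cen act (cs.simple 1 * cs.simple 2 * cs.simple 1) + (m : ℝ) • fw1 + (n : ℝ) • fw2)
variable (hths : ∀ m n : ℕ, cen act (ths m n) =
      cen act 1 + ((m : ℝ) + 1) • fw1 + ((n : ℝ) + 1) • fw2)

include h0 h1 h2 hth hths in
lemma Lths1 (hcen : Function.Injective (cen act)) (m n : ℕ) :
    Lset cs (ths m n) =
      ({cs.simple 1 * ths m n, cs.simple 2 * ths m n} : Set W) ∪
      {w | w = th m n ∨ (∃ m', m = m' + 1 ∧ w = th m' (n + 1)) ∨
        (∃ n', n = n' + 1 ∧ w = th (m + 1) n')} := by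
  have cy : cen act (ths m n) = spt (m : ℤ) (n : ℤ) 2 := cths act ths hths m n
  have ly : cs.length (ths m n) = nN (m : ℤ) (n : ℤ) 2 :=
    lenc cs act h0 h1 h2 (Or.inr rfl) cy hcen
  have c1 := cm1 cs act h1 cy
  have l1 := lenc cs act h0 h1 h2 (by norm_num) c1 hcen
  have c2 := cm2 cs act h2 cy
  have l2 := lenc cs act h0 h1 h2 (by norm_num) c2 hcen
  ext w
  simp only [Set.mem_union, Set.mem_insert_iff, Set.mem_singleton_iff, Set.mem_setOf_eq]
  constructor
  · intro hw
    obtain ⟨⟨t, ht, rfl⟩, hlen⟩ := (lset_mem_iff cs _ _).1 hw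
    obtain ⟨k, hk | hk | hk⟩ := refFam_of_isReflection cs act h0 h1 h2 ht
    · -- α₁ type
      have cw := cenm1 act hk cy
      have lw := lenc cs act h0 h1 h2 (by norm_num) cw hcen
      rw [ly, lw] at hlen
      have hcase : k = 0 ∨ (k = (m:ℤ) ∧ 1 ≤ m) := by simp only [nN] at hlen; omega
      rcases hcase with rfl | ⟨rfl, hm⟩
      · exact Or.inl (Or.inl (hcen (cw.trans (c1.trans
          (spt_congr (by ring) (by ring) rfl)).symm)))
      · refine Or.inr (Or.inr (Or.inl ⟨m - 1, by omega, hcen (cw.trans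
          ((cth cs act th hth (m-1) (n+1) (cw0 cs act h1 h2)).trans
            (spt_congr (by omega) (by omega) (by omega))).symm)⟩))
    · -- α₂ type
      have cw := cenm2 act hk cy
      have lw := lenc cs act h0 h1 h2 (by norm_num) cw hcen
      rw [ly, lw] at hlen
      have hcase : k = 0 ∨ (k = (n:ℤ) ∧ 1 ≤ n) := by simp only [nN] at hlen; omega
      rcases hcase with rfl | ⟨rfl, hn⟩
      · exact Or.inl (Or.inr (hcen (cw.trans (c2.trans
          (spt_congr (by ring) (by ring) rfl)).symm)))
      · refine Or.inr (Or.inr (Or.inr ⟨n - 1, by omega, hcen (cw.trans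
          ((cth cs act th hth (m+1) (n-1) (cw0 cs act h1 h2)).trans
            (spt_congr (by omega) (by omega) (by omega))).symm)⟩))
    · -- ρ type
      have cw := cenmr act hk cy
      have lw := lenc cs act h0 h1 h2 (by norm_num) cw hcen
      rw [ly, lw] at hlen
      have hcase : k = (m:ℤ) + (n:ℤ) + 1 := by simp only [nN] at hlen; omega
      subst hcase
      exact Or.inr (Or.inl (hcen (cw.trans
        ((cth cs act th hth m n (cw0 cs act h1 h2)).trans
          (spt_congr (by omega) (by omega) (by omega))).symm)))
  · intro hw
    rcases hw with (rfl | rfl) | rfl | ⟨m', hm, rfl⟩ | ⟨n', hn, rfl⟩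
    · exact mem_lset cs (cs.isReflection_simple 1) rfl (by rw [ly, l1]; simp only [nN]; omega)
    · exact mem_lset cs (cs.isReflection_simple 2) rfl (by rw [ly, l2]; simp only [nN]; omega)
    · refine mem_lset cs (isRefl_rfr cs ((m:ℤ)+(n:ℤ)+1)) (hcen (by
        rw [cth cs act th hth m n (cw0 cs act h1 h2),
          cenmr act (act_rfr cs act h0 h1 h2 ((m:ℤ)+(n:ℤ)+1)) cy]
        exact spt_congr (by omega) (by omega) (by omega))) ?_
      rw [ly, lenc cs act h0 h1 h2 (Or.inl rfl) (cth cs act th hth m n (cw0 cs act h1 h2)) hcen]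
      simp only [nN]; omega
    · refine mem_lset cs (isRefl_rf1 cs (m:ℤ)) (hcen (by
        rw [cth cs act th hth m' (n+1) (cw0 cs act h1 h2),
          cenm1 act (act_rf1 cs act h0 h1 h2 (m:ℤ)) cy]
        exact spt_congr (by omega) (by omega) (by omega))) ?_
      rw [ly, lenc cs act h0 h1 h2 (Or.inl rfl)
        (cth cs act th hth m' (n+1) (cw0 cs act h1 h2)) hcen]
      simp only [nN]; omega
    · refine mem_lset cs (isRefl_rf2 cs (n:ℤ)) (hcen (by
        rw [cth cs act th hth (m+1) n' (cw0 cs act h1 h2),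
          cenm2 act (act_rf2 cs act h0 h1 h2 (n:ℤ)) cy]
        exact spt_congr (by omega) (by omega) (by omega))) ?_
      rw [ly, lenc cs act h0 h1 h2 (Or.inl rfl)
        (cth cs act th hth (m+1) n' (cw0 cs act h1 h2)) hcen]
      simp only [nN]; omega

include h0 h1 h2 hth hths in
lemma Lths2 (hcen : Function.Injective (cen act)) (m n : ℕ) :
    Disjoint ({cs.simple 1 * ths m n, cs.simple 2 * ths m n} : Set W)
      {w | w = th m n ∨ (∃ m', m = m' + 1 ∧ w = th m' (n + 1)) ∨
        (∃ n', n = n' + 1 ∧ w = th (m + 1) n')} := by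
  have cy : cen act (ths m n) = spt (m : ℤ) (n : ℤ) 2 := cths act ths hths m n
  have c1 := cm1 cs act h1 cy
  have c2 := cm2 cs act h2 cy
  rw [Set.disjoint_left]
  rintro w (rfl | rfl) (h | ⟨m', hm, h⟩ | ⟨n', hn, h⟩) <;>
    first
    | (have hc := congrArg (cen act) h
       rw [c1, cth cs act th hth _ _ (cw0 cs act h1 h2)] at hc
       have := spt_inj (by norm_num) (by norm_num) hc
       omega)
    | (have hc := congrArg (cen act) h
       rw [c2, cth cs act th hth _ _ (cw0 cs act h1 h2)] at hc
       have := spt_inj (by norm_num) (by norm_num) hc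
       omega)

include h0 h1 h2 hth hths in
lemma Lths3 (hcen : Function.Injective (cen act)) (m n : ℕ) :
    Lset cs (ths m n) ∩ Dset th ths =
      {w | w = th m n ∨ (∃ m', m = m' + 1 ∧ w = th m' (n + 1)) ∨
        (∃ n', n = n' + 1 ∧ w = th (m + 1) n')} := by
  have cy : cen act (ths m n) = spt (m : ℤ) (n : ℤ) 2 := cths act ths hths m n
  have c1 := cm1 cs act h1 cy
  have c2 := cm2 cs act h2 cy
  ext w
  simp only [Set.mem_inter_iff, Set.mem_setOf_eq]
  constructor
  · rintro ⟨hl, hd⟩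
    rw [Lths1 cs act h0 h1 h2 th ths hth hths hcen m n] at hl
    rcases hl with hl | hl
    · exfalso
      simp only [Set.mem_insert_iff, Set.mem_singleton_iff] at hl
      rcases hd with ⟨a, b, hab⟩ | ⟨a, b, hab⟩ <;> rcases hl with rfl | rfl <;>
        first
        | (have hc := congrArg (cen act) hab
           rw [c1, cth cs act th hth a b (cw0 cs act h1 h2)] at hc
           have := spt_inj (by norm_num) (by norm_num) hc
           omega)
        | (have hc := congrArg (cen act) hab
           rw [c2, cth cs act th hth a b (cw0 cs act h1 h2)] at hc
           have := spt_inj (by norm_num) (by norm_num) hc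
           omega)
        | (have hc := congrArg (cen act) hab
           rw [c1, cths act ths hths] at hc
           have := spt_inj (by norm_num) (by norm_num) hc
           omega)
        | (have hc := congrArg (cen act) hab
           rw [c2, cths act ths hths] at hc
           have := spt_inj (by norm_num) (by norm_num) hc
           omega)
    · exact hl
  · intro hb
    refine ⟨by
      rw [Lths1 cs act h0 h1 h2 th ths hth hths hcen m n]
      exact Or.inr hb, ?_⟩
    rcases hb with rfl | ⟨m', hm, rfl⟩ | ⟨n', hn, rfl⟩
    · exact Or.inl ⟨m, n, rfl⟩
    · exact Or.inl ⟨m', n+1, rfl⟩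
    · exact Or.inl ⟨m+1, n', rfl⟩

include h0 h1 h2 hth hths in
lemma Lths4 (hcen : Function.Injective (cen act)) (m n : ℕ) :
    Lset cs (cs.simple 0 * ths m n) =
      (fun w => cs.simple 0 * w) '' Lset cs (ths m n) ∪ {ths m n} := by
  have cy : cen act (ths m n) = spt (m : ℤ) (n : ℤ) 2 := cths act ths hths m n
  have ly : cs.length (ths m n) = nN (m : ℤ) (n : ℤ) 2 :=
    lenc cs act h0 h1 h2 (Or.inr rfl) cy hcen
  have c0y := cm0 cs act h0 cy
  have l0y := lenc cs act h0 h1 h2 (by norm_num) c0y hcen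
  have c1 := cm1 cs act h1 cy
  have c2 := cm2 cs act h2 cy
  ext w
  simp only [Set.mem_union, Set.mem_image, Set.mem_singleton_iff]
  constructor
  · intro hw
    obtain ⟨⟨t, ht, rfl⟩, hlen⟩ := (lset_mem_iff cs _ _).1 hw
    obtain ⟨k, hk | hk | hk⟩ := refFam_of_isReflection cs act h0 h1 h2 ht
    · -- α₁ type : k = -1 (↦ s₀s₂y) or k = -n-1 (↦ s₀·th (m+1) (n-1))
      have cw := cenm1 act hk c0y
      have lw := lenc cs act h0 h1 h2 (by norm_num) cw hcen
      rw [l0y, lw] at hlen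
      have hcase : k = -1 ∨ (k = -(n:ℤ)-1 ∧ 1 ≤ n) := by simp only [nN] at hlen; omega
      rcases hcase with rfl | ⟨rfl, hn⟩
      · refine Or.inl ⟨cs.simple 2 * ths m n, ?_, ?_⟩
        · rw [Lths1 cs act h0 h1 h2 th ths hth hths hcen m n]
          exact Or.inl (Or.inr rfl)
        · exact (hcen (cw.trans ((cm0 cs act h0 c2).trans
            (spt_congr (by ring) (by ring) (by ring))).symm)).symm
      · refine Or.inl ⟨th (m+1) (n-1), ?_, ?_⟩
        · rw [Lths1 cs act h0 h1 h2 th ths hth hths hcen m n]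
          exact Or.inr (Or.inr (Or.inr ⟨n-1, by omega, rfl⟩))
        · exact (hcen (cw.trans ((cm0 cs act h0
            (cth cs act th hth (m+1) (n-1) (cw0 cs act h1 h2))).trans
            (spt_congr (by omega) (by omega) (by omega))).symm)).symm
    · -- α₂ type : k = -1 (↦ s₀s₁y) or k = -m-1 (↦ s₀·th (m-1) (n+1))
      have cw := cenm2 act hk c0y
      have lw := lenc cs act h0 h1 h2 (by norm_num) cw hcen
      rw [l0y, lw] at hlen
      have hcase : k = -1 ∨ (k = -(m:ℤ)-1 ∧ 1 ≤ m) := by simp only [nN] at hlen; omega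
      rcases hcase with rfl | ⟨rfl, hm⟩
      · refine Or.inl ⟨cs.simple 1 * ths m n, ?_, ?_⟩
        · rw [Lths1 cs act h0 h1 h2 th ths hth hths hcen m n]
          exact Or.inl (Or.inl rfl)
        · exact (hcen (cw.trans ((cm0 cs act h0 c1).trans
            (spt_congr (by ring) (by ring) (by ring))).symm)).symm
      · refine Or.inl ⟨th (m-1) (n+1), ?_, ?_⟩
        · rw [Lths1 cs act h0 h1 h2 th ths hth hths hcen m n]
          exact Or.inr (Or.inr (Or.inl ⟨m-1, by omega, rfl⟩))
        · exact (hcen (cw.trans ((cm0 cs act h0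
            (cth cs act th hth (m-1) (n+1) (cw0 cs act h1 h2))).trans
            (spt_congr (by omega) (by omega) (by omega))).symm)).symm
    · -- ρ type : k = -1 (↦ y) or k = -m-n-3 (↦ s₀·th m n)
      have cw := cenmr act hk c0y
      have lw := lenc cs act h0 h1 h2 (by norm_num) cw hcen
      rw [l0y, lw] at hlen
      have hcase : k = -1 ∨ k = -(m:ℤ)-(n:ℤ)-3 := by simp only [nN] at hlen; omega
      rcases hcase with rfl | rfl
      · exact Or.inr (hcen (cw.trans (cy.trans
          (spt_congr (by ring) (by ring) (by ring))).symm))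
      · refine Or.inl ⟨th m n, ?_, ?_⟩
        · rw [Lths1 cs act h0 h1 h2 th ths hth hths hcen m n]
          exact Or.inr (Or.inl rfl)
        · exact (hcen (cw.trans ((cm0 cs act h0
            (cth cs act th hth m n (cw0 cs act h1 h2))).trans
            (spt_congr (by omega) (by omega) (by omega))).symm)).symm
  · intro hw
    rcases hw with ⟨u, hu, rfl⟩ | rfl
    · obtain ⟨⟨t, ht, hueq⟩, hlu⟩ := (lset_mem_iff cs _ _).1 hu
      have ht' := ht.conj (cs.simple 0)
      have heq : cs.simple 0 * u =
          (cs.simple 0 * t * (cs.simple 0)⁻¹) * (cs.simple 0 * ths m n) := by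
        rw [hueq]; group
      refine mem_lset cs ht' heq ?_
      rw [Lths1 cs act h0 h1 h2 th ths hth hths hcen m n] at hu
      rcases hu with (rfl | rfl) | rfl | ⟨m', hm, rfl⟩ | ⟨n', hn, rfl⟩
      · rw [l0y, lenc cs act h0 h1 h2 (by norm_num) (cm0 cs act h0 c1) hcen]
        simp only [nN]; omega
      · rw [l0y, lenc cs act h0 h1 h2 (by norm_num) (cm0 cs act h0 c2) hcen]
        simp only [nN]; omega
      · rw [l0y, lenc cs act h0 h1 h2 (by norm_num)
          (cm0 cs act h0 (cth cs act th hth m n (cw0 cs act h1 h2))) hcen]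
        simp only [nN]; omega
      · rw [l0y, lenc cs act h0 h1 h2 (by norm_num)
          (cm0 cs act h0 (cth cs act th hth m' (n+1) (cw0 cs act h1 h2))) hcen]
        simp only [nN]; omega
      · rw [l0y, lenc cs act h0 h1 h2 (by norm_num)
          (cm0 cs act h0 (cth cs act th hth (m+1) n' (cw0 cs act h1 h2))) hcen]
        simp only [nN]; omega
    · refine mem_lset cs (cs.isReflection_simple 0)
        (cs.simple_mul_simple_cancel_left 0).symm ?_
      rw [l0y, ly]; simp only [nN]; omega

include h0 h1 h2 hth hths in
lemma Lths5 (hcen : Function.Injective (cen act)) (m n : ℕ) :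
    ths m n ∉ (fun w => cs.simple 0 * w) '' Lset cs (ths m n) := by
  have cy : cen act (ths m n) = spt (m : ℤ) (n : ℤ) 2 := cths act ths hths m n
  have ly : cs.length (ths m n) = nN (m : ℤ) (n : ℤ) 2 :=
    lenc cs act h0 h1 h2 (Or.inr rfl) cy hcen
  have c0y := cm0 cs act h0 cy
  have l0y := lenc cs act h0 h1 h2 (by norm_num) c0y hcen
  rintro ⟨u, hu, heq⟩
  have hu' : u = cs.simple 0 * ths m n := by
    have := congrArg (fun x => cs.simple 0 * x) heq
    simp only at this
    rw [cs.simple_mul_simple_cancel_left] at this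
    rw [this]
  subst hu'
  have := ((lset_mem_iff cs _ _).1 hu).2
  rw [ly, l0y] at this
  simp only [nN] at this
  omega

end S1main
/-- description of the Bruhat cocovers of dominant elements and of `s₀ · y`. -/
theorem statement1
    {W : Type*} [Group W] {M : CoxeterMatrix (Fin 3)} (cs : CoxeterSystem M W)
    (hM : ∀ i j : Fin 3, M i j = if i = j then 1 else 3)
    (act : W →* Equiv.Perm E2)
    (h0 : ∀ v, act (cs.simple 0) v = reflE rho2 (-1) v)
    (h1 : ∀ v, act (cs.simple 1) v = reflE a1 0 v)
    (h2 : ∀ v, act (cs.simple 2) v = reflE a2 0 v)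
    (hcen : Function.Injective (cen act))
    (th ths : ℕ → ℕ → W)
    (hth : ∀ m n : ℕ, cen act (th m n) =
      cen act (cs.simple 1 * cs.simple 2 * cs.simple 1) + (m : ℝ) • fw1 + (n : ℝ) • fw2)
    (hths : ∀ m n : ℕ, cen act (ths m n) =
      cen act 1 + ((m : ℝ) + 1) • fw1 + ((n : ℝ) + 1) • fw2) :
    ∀ m n : ℕ,
      (Lset cs (th m n) =
          ({cs.simple 1 * th m n, cs.simple 2 * th m n} : Set W) ∪ {w | (∃ m', m = m' + 1 ∧ w = ths m' n) ∨ (∃ n', n = n' + 1 ∧ w = ths m n')} ∧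
        Disjoint ({cs.simple 1 * th m n, cs.simple 2 * th m n} : Set W) {w | (∃ m', m = m' + 1 ∧ w = ths m' n) ∨ (∃ n', n = n' + 1 ∧ w = ths m n')} ∧
        Lset cs (th m n) ∩ Dset th ths = {w | (∃ m', m = m' + 1 ∧ w = ths m' n) ∨ (∃ n', n = n' + 1 ∧ w = ths m n')} ∧
        Lset cs (cs.simple 0 * th m n) =
          (fun w => cs.simple 0 * w) '' Lset cs (th m n) ∪ {th m n} ∧
        th m n ∉ (fun w => cs.simple 0 * w) '' Lset cs (th m n)) ∧
      (Lset cs (ths m n) =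
          ({cs.simple 1 * ths m n, cs.simple 2 * ths m n} : Set W) ∪ {w | w = th m n ∨ (∃ m', m = m' + 1 ∧ w = th m' (n + 1)) ∨ (∃ n', n = n' + 1 ∧ w = th (m + 1) n')} ∧
        Disjoint ({cs.simple 1 * ths m n, cs.simple 2 * ths m n} : Set W) {w | w = th m n ∨ (∃ m', m = m' + 1 ∧ w = th m' (n + 1)) ∨ (∃ n', n = n' + 1 ∧ w = th (m + 1) n')} ∧
        Lset cs (ths m n) ∩ Dset th ths = {w | w = th m n ∨ (∃ m', m = m' + 1 ∧ w = th m' (n + 1)) ∨ (∃ n', n = n' + 1 ∧ w = th (m + 1) n')} ∧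
        Lset cs (cs.simple 0 * ths m n) =
          (fun w => cs.simple 0 * w) '' Lset cs (ths m n) ∪ {ths m n} ∧
        ths m n ∉ (fun w => cs.simple 0 * w) '' Lset cs (ths m n)) := by
  intro m n
  exact ⟨⟨S1main.Lth1 cs act h0 h1 h2 th ths hth hths hcen m n,
      S1main.Lth2 cs act h0 h1 h2 th ths hth hths hcen m n,
      S1main.Lth3 cs act h0 h1 h2 th ths hth hths hcen m n,
      S1main.Lth4 cs act h0 h1 h2 th ths hth hths hcen m n,
      S1main.Lth5 cs act h0 h1 h2 th ths hth hths hcen m n⟩,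
    ⟨S1main.Lths1 cs act h0 h1 h2 th ths hth hths hcen m n,
      S1main.Lths2 cs act h0 h1 h2 th ths hth hths hcen m n,
      S1main.Lths3 cs act h0 h1 h2 th ths hth hths hcen m n,
      S1main.Lths4 cs act h0 h1 h2 th ths hth hths hcen m n,
      S1main.Lths5 cs act h0 h1 h2 th ths hth hths hcen m n⟩⟩
end
end

section
/- Let z, z' ∈ W be such that cen(z) ∈ F_id and cen(z') ∈ F_id. Then z ≤ z' in the Bruhat order if and only if both (ϖ1, cen(z') − cen(z)) ≥ 0 and (ϖ2, cen(z') − cen(z)) ≥ 0, i.e. if and only if cen(z') − cen(z) is a nonnegative real combination of α1 and α2. -/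
noncomputable section
set_option maxHeartbeats 2000000

open scoped RealInnerProductSpace

/-! ### Auxiliary infrastructure for statement 5 -/

section Statement5Aux

theorem reflE_a1_apply (k : ℝ) (v : E2) : reflE a1 k v = (v.2 - v.1 + k, v.2) := by
  simp only [reflE, B2, a1, Prod.smul_mk, smul_eq_mul, Prod.mk.injEq, Prod.ext_iff,
    Prod.fst_sub, Prod.snd_sub]
  constructor <;> ring

theorem reflE_a2_apply (k : ℝ) (v : E2) : reflE a2 k v = (v.1, v.1 - v.2 + k) := by
  simp only [reflE, B2, a2, Prod.smul_mk, smul_eq_mul, Prod.mk.injEq, Prod.ext_iff,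
    Prod.fst_sub, Prod.snd_sub]
  constructor <;> ring

theorem reflE_rho_apply (k : ℝ) (v : E2) : reflE rho2 k v = (k - v.2, k - v.1) := by
  simp only [reflE, B2, rho2, Prod.smul_mk, smul_eq_mul, Prod.mk.injEq, Prod.ext_iff,
    Prod.fst_sub, Prod.snd_sub]
  constructor <;> ring

theorem B2_fw1 (v : E2) : B2 fw1 v = v.1 := by simp only [B2, fw1]; ring
theorem B2_fw2 (v : E2) : B2 fw2 v = v.2 := by simp only [B2, fw2]; ring
theorem B2_a1' (v : E2) : B2 a1 v = 2*v.1 - v.2 := by simp only [B2, a1]; ring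
theorem B2_a2' (v : E2) : B2 a2 v = 2*v.2 - v.1 := by simp only [B2, a2]; ring
theorem B2_rho' (v : E2) : B2 rho2 v = v.1 + v.2 := by simp only [B2, rho2]; ring

variable {W : Type*} [Group W] {M : CoxeterMatrix (Fin 3)} (cs : CoxeterSystem M W)
variable (act : W →* Equiv.Perm E2)

/-- The alcove data of an element: integers `m1, m2` and a type `d ∈ {0,1}` recording
the position of the barycenter. -/
def Md (w : W) (m1 m2 d : ℤ) : Prop :=
  (d = 0 ∨ d = 1) ∧
    cen act w = ((2*(m1:ℝ)+m2-1-d)/3, ((m1:ℝ)+2*m2-1-d)/3)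

theorem act_mul_apply (x y : W) (v : E2) : act (x*y) v = act x (act y v) := by
  simp [map_mul, Equiv.Perm.mul_apply]

theorem cen_mul (x y : W) : cen act (x*y) = act x (cen act y) := by
  simp [cen, map_mul, Equiv.Perm.mul_apply]

theorem Md_one : Md act 1 0 0 0 := by
  refine ⟨Or.inl rfl, ?_⟩
  simp only [cen, map_one, Equiv.Perm.one_apply, rho2, Prod.smul_mk, smul_eq_mul]
  norm_num

theorem Md_unique {w : W} {m1 m2 d n1 n2 e : ℤ} (h : Md act w m1 m2 d)
    (h' : Md act w n1 n2 e) : m1 = n1 ∧ m2 = n2 ∧ d = e := by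
  obtain ⟨hd, hp⟩ := h
  obtain ⟨he, hp'⟩ := h'
  rw [hp] at hp'
  rw [Prod.ext_iff] at hp'
  obtain ⟨e1, e2⟩ := hp'
  have e1' : 2*(m1:ℝ)+m2-1-d = 2*(n1:ℝ)+n2-1-e := by
    field_simp at e1; linarith
  have e2' : (m1:ℝ)+2*m2-1-d = (n1:ℝ)+2*n2-1-e := by
    field_simp at e2; linarith
  have i1 : 2*m1+m2-1-d = 2*n1+n2-1-e := by exact_mod_cast e1'
  have i2 : m1+2*m2-1-d = n1+2*n2-1-e := by exact_mod_cast e2'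
  omega

/-- Transformation of alcove data under the affine reflection `s_{alpha_1, k}`. -/
theorem Md_step1 {w x : W} {m1 m2 d : ℤ} (h : Md act w m1 m2 d) (k : ℤ)
    (hx : cen act x = reflE a1 (k:ℝ) (cen act w)) :
    Md act x (2*k+1-m1) (m1+m2-d-k) (1-d) := by
  obtain ⟨hd, hp⟩ := h
  refine ⟨by omega, ?_⟩
  rw [hx, hp, reflE_a1_apply]
  rw [Prod.ext_iff]
  constructor <;> · simp only; push_cast; ring

theorem Md_step2 {w x : W} {m1 m2 d : ℤ} (h : Md act w m1 m2 d) (k : ℤ)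
    (hx : cen act x = reflE a2 (k:ℝ) (cen act w)) :
    Md act x (m1+m2-d-k) (2*k+1-m2) (1-d) := by
  obtain ⟨hd, hp⟩ := h
  refine ⟨by omega, ?_⟩
  rw [hx, hp, reflE_a2_apply]
  rw [Prod.ext_iff]
  constructor <;> · simp only; push_cast; ring

theorem Md_step3 {w x : W} {m1 m2 d : ℤ} (h : Md act w m1 m2 d) (k : ℤ)
    (hx : cen act x = reflE rho2 (k:ℝ) (cen act w)) :
    Md act x (k+1-m2) (k+1-m1) (1-d) := by
  obtain ⟨hd, hp⟩ := h
  refine ⟨by omega, ?_⟩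
  rw [hx, hp, reflE_rho_apply]
  rw [Prod.ext_iff]
  constructor <;> · simp only; push_cast; ring

section WithAction

variable (h0 : ∀ v, act (cs.simple 0) v = reflE rho2 (-1) v)
variable (h1 : ∀ v, act (cs.simple 1) v = reflE a1 0 v)
variable (h2 : ∀ v, act (cs.simple 2) v = reflE a2 0 v)

include h0 h1 h2

theorem Md_exists (w : W) : ∃ m1 m2 d, Md act w m1 m2 d := by
  obtain ⟨ω, rfl⟩ := cs.wordProd_surjective w
  induction ω with
  | nil =>
    exact ⟨0, 0, 0, by rw [cs.wordProd_nil]; exact Md_one act⟩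
  | cons i ω ih =>
    obtain ⟨m1, m2, d, h⟩ := ih
    rw [cs.wordProd_cons]
    fin_cases i
    · have hs : cen act (cs.simple 0 * cs.wordProd ω)
          = reflE rho2 ((-1 : ℤ) : ℝ) (cen act (cs.wordProd ω)) := by
        rw [cen_mul act, h0]; norm_num
      exact ⟨_, _, _, Md_step3 act h (-1) hs⟩
    · have hs : cen act (cs.simple 1 * cs.wordProd ω)
          = reflE a1 ((0 : ℤ) : ℝ) (cen act (cs.wordProd ω)) := by
        rw [cen_mul act, h1]; norm_num
      exact ⟨_, _, _, Md_step1 act h 0 hs⟩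
    · have hs : cen act (cs.simple 2 * cs.wordProd ω)
          = reflE a2 ((0 : ℤ) : ℝ) (cen act (cs.wordProd ω)) := by
        rw [cen_mul act, h2]; norm_num
      exact ⟨_, _, _, Md_step2 act h 0 hs⟩

/-- The conjectural length: number of separating walls. -/
def NF (m1 m2 d : ℤ) : ℕ := m1.natAbs + m2.natAbs + (m1+m2-d).natAbs

theorem NF_le_length (w : W) (m1 m2 d : ℤ) (h : Md act w m1 m2 d) :
    NF m1 m2 d ≤ cs.length w := by
  obtain ⟨ω, hlen, rfl⟩ := cs.exists_reduced_word w
  rw [hlen.eq]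
  clear hlen
  induction ω generalizing m1 m2 d with
  | nil =>
    rw [cs.wordProd_nil] at h
    obtain ⟨e1, e2, e3⟩ := Md_unique act h (Md_one act)
    simp [NF, e1, e2, e3]
  | cons i ω ih =>
    rw [cs.wordProd_cons] at h
    obtain ⟨n1, n2, e, hn⟩ := Md_exists cs act h0 h1 h2 (cs.wordProd ω)
    have ihn := ih n1 n2 e hn
    have he : e = 0 ∨ e = 1 := hn.1
    simp only [List.length_cons]
    fin_cases i
    · have hs : cen act (cs.simple 0 * cs.wordProd ω)
          = reflE rho2 ((-1 : ℤ) : ℝ) (cen act (cs.wordProd ω)) := by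
        rw [cen_mul act, h0]; norm_num
      obtain ⟨e1, e2, e3⟩ := Md_unique act h (Md_step3 act hn (-1) hs)
      simp only [NF] at *
      omega
    · have hs : cen act (cs.simple 1 * cs.wordProd ω)
          = reflE a1 ((0 : ℤ) : ℝ) (cen act (cs.wordProd ω)) := by
        rw [cen_mul act, h1]; norm_num
      obtain ⟨e1, e2, e3⟩ := Md_unique act h (Md_step1 act hn 0 hs)
      simp only [NF] at *
      omega
    · have hs : cen act (cs.simple 2 * cs.wordProd ω)
          = reflE a2 ((0 : ℤ) : ℝ) (cen act (cs.wordProd ω)) := by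
        rw [cen_mul act, h2]; norm_num
      obtain ⟨e1, e2, e3⟩ := Md_unique act h (Md_step2 act hn 0 hs)
      simp only [NF] at *
      omega

theorem Md_zero (hcen : Function.Injective (cen act)) {w : W} (h : Md act w 0 0 0) :
    w = 1 := hcen (h.2.trans (Md_one act).2.symm)

theorem length_le_NF (hcen : Function.Injective (cen act)) :
    ∀ n (w : W) (m1 m2 d : ℤ), Md act w m1 m2 d → NF m1 m2 d ≤ n →
      cs.length w ≤ NF m1 m2 d := by
  intro n
  induction n with
  | zero =>
    intro w m1 m2 d h hle
    have hd := h.1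
    have h1' : m1 = 0 ∧ m2 = 0 ∧ d = 0 := by simp only [NF] at hle; omega
    obtain ⟨rfl, rfl, rfl⟩ := h1'
    rw [Md_zero cs act h0 h1 h2 hcen h, cs.length_one]
    exact Nat.zero_le _
  | succ n ih =>
    intro w m1 m2 d h hle
    have hd := h.1
    by_cases c1 : 1 ≤ m1
    · have hs : cen act (cs.simple 1 * w)
          = reflE a1 ((0 : ℤ) : ℝ) (cen act w) := by
        rw [cen_mul act, h1]; norm_num
      have h' := Md_step1 act h 0 hs
      have hNF : NF (2*0+1-m1) (m1+m2-d-0) (1-d) + 1 = NF m1 m2 d := by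
        simp only [NF]; omega
      have hlen := ih (cs.simple 1 * w) _ _ _ h' (by omega)
      have hl2 := cs.length_simple_mul w 1
      omega
    by_cases c2 : 1 ≤ m2
    · have hs : cen act (cs.simple 2 * w)
          = reflE a2 ((0 : ℤ) : ℝ) (cen act w) := by
        rw [cen_mul act, h2]; norm_num
      have h' := Md_step2 act h 0 hs
      have hNF : NF (m1+m2-d-0) (2*0+1-m2) (1-d) + 1 = NF m1 m2 d := by
        simp only [NF]; omega
      have hlen := ih (cs.simple 2 * w) _ _ _ h' (by omega)
      have hl2 := cs.length_simple_mul w 2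
      omega
    by_cases c3 : m1 + m2 - d ≤ -1
    · have hs : cen act (cs.simple 0 * w)
          = reflE rho2 ((-1 : ℤ) : ℝ) (cen act w) := by
        rw [cen_mul act, h0]; norm_num
      have h' := Md_step3 act h (-1) hs
      have hNF : NF (-1+1-m2) (-1+1-m1) (1-d) + 1 = NF m1 m2 d := by
        simp only [NF]; omega
      have hlen := ih (cs.simple 0 * w) _ _ _ h' (by omega)
      have hl2 := cs.length_simple_mul w 0
      omega
    · have h1' : m1 = 0 ∧ m2 = 0 ∧ d = 0 := by omega
      obtain ⟨rfl, rfl, rfl⟩ := h1'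
      rw [Md_zero cs act h0 h1 h2 hcen h, cs.length_one]
      exact Nat.zero_le _

theorem length_eq_NF (hcen : Function.Injective (cen act)) (w : W) (m1 m2 d : ℤ)
    (h : Md act w m1 m2 d) : cs.length w = NF m1 m2 d :=
  le_antisymm (length_le_NF cs act h0 h1 h2 hcen _ w m1 m2 d h le_rfl)
    (NF_le_length cs act h0 h1 h2 w m1 m2 d h)

end WithAction

/-- Translation by `α₁`. -/
def tau1 : W := cs.simple 1 * (cs.simple 2 * cs.simple 0 * cs.simple 2)
/-- Translation by `α₂`. -/
def tau2 : W := cs.simple 2 * (cs.simple 1 * cs.simple 0 * cs.simple 1)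
/-- The reflection `s_{ρ,0}`. -/
def wrho : W := cs.simple 1 * (cs.simple 2 * cs.simple 1)

section WithAction2

variable (h0 : ∀ v, act (cs.simple 0) v = reflE rho2 (-1) v)
variable (h1 : ∀ v, act (cs.simple 1) v = reflE a1 0 v)
variable (h2 : ∀ v, act (cs.simple 2) v = reflE a2 0 v)

include h0 h1 h2

theorem act_tau1 (v : E2) : act (tau1 cs) v = (v.1 + 1, v.2 + 0) := by
  simp only [tau1, map_mul, Equiv.Perm.mul_apply, h0, h1, h2,
    reflE_a1_apply, reflE_a2_apply, reflE_rho_apply]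
  rw [Prod.ext_iff]
  constructor <;> · simp only; ring

theorem act_tau2 (v : E2) : act (tau2 cs) v = (v.1 + 0, v.2 + 1) := by
  simp only [tau2, map_mul, Equiv.Perm.mul_apply, h0, h1, h2,
    reflE_a1_apply, reflE_a2_apply, reflE_rho_apply]
  rw [Prod.ext_iff]
  constructor <;> · simp only; ring

omit h0 in
theorem act_wrho (v : E2) : act (wrho cs) v = (-v.2, -v.1) := by
  simp only [wrho, map_mul, Equiv.Perm.mul_apply, h1, h2,
    reflE_a1_apply, reflE_a2_apply]
  rw [Prod.ext_iff]
  constructor <;> · simp only; ring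

omit h0 h1 h2 in
theorem act_zpow_t {g : W} {c1 c2 : ℝ}
    (hg : ∀ v : E2, act g v = (v.1 + c1, v.2 + c2)) (n : ℤ) (v : E2) :
    act (g ^ n) v = (v.1 + n * c1, v.2 + n * c2) := by
  have hinv : ∀ v : E2, act g⁻¹ v = (v.1 - c1, v.2 - c2) := by
    intro v
    have hv : act g ((v.1 - c1, v.2 - c2) : E2) = v := by
      rw [hg]
      rw [Prod.ext_iff]
      constructor <;> · simp only; ring
    have hc := congrArg (act g⁻¹) hv
    rw [← act_mul_apply, inv_mul_cancel, map_one, Equiv.Perm.one_apply] at hc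
    exact hc.symm
  induction n using Int.induction_on generalizing v with
  | zero => simp [Prod.ext_iff]
  | succ i ihp =>
    rw [zpow_add_one, act_mul_apply, hg, ihp]
    rw [Prod.ext_iff]
    constructor <;> · simp only; push_cast; ring
  | pred i ihn =>
    rw [zpow_sub_one, act_mul_apply, hinv, ihn]
    rw [Prod.ext_iff]
    constructor <;> · simp only; push_cast; ring

end WithAction2

/-- The reflection `s_{α₁,k}` as an element of `W`. -/
def T1 (k : ℤ) : W := tau2 cs ^ (-k) * cs.simple 1 * tau2 cs ^ k
/-- The reflection `s_{α₂,k}` as an element of `W`. -/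
def T2 (k : ℤ) : W := tau1 cs ^ (-k) * cs.simple 2 * tau1 cs ^ k
/-- The reflection `s_{ρ,k}` as an element of `W`. -/
def T3 (k : ℤ) : W := tau1 cs ^ k * wrho cs * tau1 cs ^ (-k)

theorem isRef_T1 (k : ℤ) : cs.IsReflection (T1 cs k) :=
  ⟨tau2 cs ^ (-k), 1, by rw [T1, zpow_neg, inv_inv]⟩

theorem isRef_T2 (k : ℤ) : cs.IsReflection (T2 cs k) :=
  ⟨tau1 cs ^ (-k), 2, by rw [T2, zpow_neg, inv_inv]⟩

theorem isRef_T3 (k : ℤ) : cs.IsReflection (T3 cs k) :=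
  ⟨tau1 cs ^ k * cs.simple 1, 2, by
    rw [T3, wrho, mul_inv_rev, cs.inv_simple, zpow_neg]
    simp only [mul_assoc]⟩

section WithAction3

variable (h0 : ∀ v, act (cs.simple 0) v = reflE rho2 (-1) v)
variable (h1 : ∀ v, act (cs.simple 1) v = reflE a1 0 v)
variable (h2 : ∀ v, act (cs.simple 2) v = reflE a2 0 v)

include h0 h1 h2

theorem act_T1 (k : ℤ) (v : E2) : act (T1 cs k) v = reflE a1 (k : ℝ) v := by
  rw [T1, act_mul_apply, act_mul_apply,
    act_zpow_t act (act_tau2 cs act h0 h1 h2), h1,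
    act_zpow_t act (act_tau2 cs act h0 h1 h2), reflE_a1_apply, reflE_a1_apply]
  rw [Prod.ext_iff]
  constructor <;> · simp only; push_cast; ring

theorem act_T2 (k : ℤ) (v : E2) : act (T2 cs k) v = reflE a2 (k : ℝ) v := by
  rw [T2, act_mul_apply, act_mul_apply,
    act_zpow_t act (act_tau1 cs act h0 h1 h2), h2,
    act_zpow_t act (act_tau1 cs act h0 h1 h2), reflE_a2_apply, reflE_a2_apply]
  rw [Prod.ext_iff]
  constructor <;> · simp only; push_cast; ring

theorem act_T3 (k : ℤ) (v : E2) : act (T3 cs k) v = reflE rho2 (k : ℝ) v := by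
  rw [T3, act_mul_apply, act_mul_apply,
    act_zpow_t act (act_tau1 cs act h0 h1 h2), act_wrho cs act h1 h2,
    act_zpow_t act (act_tau1 cs act h0 h1 h2), reflE_rho_apply]
  rw [Prod.ext_iff]
  constructor <;> · simp only; push_cast; ring

theorem act_simple_cases (j : Fin 3) :
    (∀ v, act (cs.simple j) v = reflE rho2 (-1) v) ∨
    (∀ v, act (cs.simple j) v = reflE a1 0 v) ∨
    (∀ v, act (cs.simple j) v = reflE a2 0 v) := by
  fin_cases j
  · exact Or.inl h0
  · exact Or.inr (Or.inl h1)
  · exact Or.inr (Or.inr h2)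

theorem refl_classify (t : W) (ht : cs.IsReflection t) :
    ∃ k : ℤ, (∀ v, act t v = reflE a1 (k:ℝ) v) ∨ (∀ v, act t v = reflE a2 (k:ℝ) v) ∨
      (∀ v, act t v = reflE rho2 (k:ℝ) v) := by
  obtain ⟨w, i, rfl⟩ := ht
  obtain ⟨ω, rfl⟩ := cs.wordProd_surjective w
  induction ω with
  | nil =>
    rw [cs.wordProd_nil, one_mul, inv_one, mul_one]
    rcases act_simple_cases cs act h0 h1 h2 i with hi | hi | hi
    · exact ⟨-1, Or.inr (Or.inr (fun v => by rw [hi]; norm_num))⟩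
    · exact ⟨0, Or.inl (fun v => by rw [hi]; norm_num)⟩
    · exact ⟨0, Or.inr (Or.inl (fun v => by rw [hi]; norm_num))⟩
  | cons j ω ih =>
    have key : cs.wordProd (j::ω) * cs.simple i * (cs.wordProd (j::ω))⁻¹
        = cs.simple j * ((cs.wordProd ω * cs.simple i * (cs.wordProd ω)⁻¹) * cs.simple j) := by
      rw [cs.wordProd_cons, mul_inv_rev, cs.inv_simple]
      group
    obtain ⟨k, hk⟩ := ih
    rw [key]
    rcases act_simple_cases cs act h0 h1 h2 j with hj | hj | hj <;>
      rcases hk with hk | hk | hk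
    · exact ⟨-1-k, Or.inr (Or.inl (fun v => by
        rw [act_mul_apply, act_mul_apply, hj, hk, hj]
        simp only [reflE_a1_apply, reflE_a2_apply, reflE_rho_apply]
        rw [Prod.ext_iff]; constructor <;> (try simp only) <;> (try push_cast) <;> (try ring)))⟩
    · exact ⟨-1-k, Or.inl (fun v => by
        rw [act_mul_apply, act_mul_apply, hj, hk, hj]
        simp only [reflE_a1_apply, reflE_a2_apply, reflE_rho_apply]
        rw [Prod.ext_iff]; constructor <;> (try simp only) <;> (try push_cast) <;> (try ring))⟩
    · exact ⟨-2-k, Or.inr (Or.inr (fun v => by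
        rw [act_mul_apply, act_mul_apply, hj, hk, hj]
        simp only [reflE_a1_apply, reflE_a2_apply, reflE_rho_apply]
        rw [Prod.ext_iff]; constructor <;> (try simp only) <;> (try push_cast) <;> (try ring)))⟩
    · exact ⟨-k, Or.inl (fun v => by
        rw [act_mul_apply, act_mul_apply, hj, hk, hj]
        simp only [reflE_a1_apply, reflE_a2_apply, reflE_rho_apply]
        rw [Prod.ext_iff]; constructor <;> (try simp only) <;> (try push_cast) <;> (try ring))⟩
    · exact ⟨k, Or.inr (Or.inr (fun v => by
        rw [act_mul_apply, act_mul_apply, hj, hk, hj]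
        simp only [reflE_a1_apply, reflE_a2_apply, reflE_rho_apply]
        rw [Prod.ext_iff]; constructor <;> (try simp only) <;> (try push_cast) <;> (try ring)))⟩
    · exact ⟨k, Or.inr (Or.inl (fun v => by
        rw [act_mul_apply, act_mul_apply, hj, hk, hj]
        simp only [reflE_a1_apply, reflE_a2_apply, reflE_rho_apply]
        rw [Prod.ext_iff]; constructor <;> (try simp only) <;> (try push_cast) <;> (try ring)))⟩
    · exact ⟨k, Or.inr (Or.inr (fun v => by
        rw [act_mul_apply, act_mul_apply, hj, hk, hj]
        simp only [reflE_a1_apply, reflE_a2_apply, reflE_rho_apply]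
        rw [Prod.ext_iff]; constructor <;> (try simp only) <;> (try push_cast) <;> (try ring)))⟩
    · exact ⟨-k, Or.inr (Or.inl (fun v => by
        rw [act_mul_apply, act_mul_apply, hj, hk, hj]
        simp only [reflE_a1_apply, reflE_a2_apply, reflE_rho_apply]
        rw [Prod.ext_iff]; constructor <;> (try simp only) <;> (try push_cast) <;> (try ring)))⟩
    · exact ⟨k, Or.inl (fun v => by
        rw [act_mul_apply, act_mul_apply, hj, hk, hj]
        simp only [reflE_a1_apply, reflE_a2_apply, reflE_rho_apply]
        rw [Prod.ext_iff]; constructor <;> (try simp only) <;> (try push_cast) <;> (try ring))⟩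

end WithAction3

theorem bruhatLT_le_trans {B' : Type*} {W' : Type*} [Group W'] {M' : CoxeterMatrix B'}
    {cs' : CoxeterSystem M' W'} {x y z : W'} (h : bruhatLT cs' x y)
    (h' : bruhatLE cs' y z) : bruhatLT cs' x z := by
  rcases h' with rfl | h'
  · exact h
  · exact h.trans h'

/-- The monotone invariant controlling the first weight coordinate. -/
def gUf (m1 m2 d : ℤ) : ℤ :=
  max (max (max (-1) (m1-1)) (max (m1+m2-d-1) (2*m1+m2-d-1)))
      (max (max (-m1-2) (-m1-2*m2+d-2)) (m2-m1-3))

theorem stepU1 (m1 m2 d n1 n2 e k : ℤ) (hd : d = 0 ∨ d = 1)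
    (h1 : n1 = 2*k+1-m1) (h2 : n2 = m1+m2-d-k) (he : e = 1-d)
    (hlen : NF m1 m2 d < NF n1 n2 e) : gUf m1 m2 d ≤ gUf n1 n2 e := by
  simp only [NF] at hlen
  subst h1 h2 he
  simp only [gUf]
  rcases hd with rfl|rfl <;>
  refine max_le (max_le (max_le ?_ ?_) (max_le ?_ ?_)) (max_le (max_le ?_ ?_) ?_) <;>
  simp only [le_max_iff] <;> omega

theorem stepU2 (m1 m2 d n1 n2 e k : ℤ) (hd : d = 0 ∨ d = 1)
    (h1 : n1 = m1+m2-d-k) (h2 : n2 = 2*k+1-m2) (he : e = 1-d)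
    (hlen : NF m1 m2 d < NF n1 n2 e) : gUf m1 m2 d ≤ gUf n1 n2 e := by
  simp only [NF] at hlen
  subst h1 h2 he
  simp only [gUf]
  rcases hd with rfl|rfl <;>
  refine max_le (max_le (max_le ?_ ?_) (max_le ?_ ?_)) (max_le (max_le ?_ ?_) ?_) <;>
  simp only [le_max_iff] <;> omega

theorem stepU3 (m1 m2 d n1 n2 e k : ℤ) (hd : d = 0 ∨ d = 1)
    (h1 : n1 = k+1-m2) (h2 : n2 = k+1-m1) (he : e = 1-d)
    (hlen : NF m1 m2 d < NF n1 n2 e) : gUf m1 m2 d ≤ gUf n1 n2 e := by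
  simp only [NF] at hlen
  subst h1 h2 he
  simp only [gUf]
  rcases hd with rfl|rfl <;>
  refine max_le (max_le (max_le ?_ ?_) (max_le ?_ ?_)) (max_le (max_le ?_ ?_) ?_) <;>
  simp only [le_max_iff] <;> omega

end Statement5Aux

section Main

variable {W : Type*} [Group W] {M : CoxeterMatrix (Fin 3)} (cs : CoxeterSystem M W)
variable (act : W →* Equiv.Perm E2)
variable (h0 : ∀ v, act (cs.simple 0) v = reflE rho2 (-1) v)
variable (h1 : ∀ v, act (cs.simple 1) v = reflE a1 0 v)
variable (h2 : ∀ v, act (cs.simple 2) v = reflE a2 0 v)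
variable (hcen : Function.Injective (cen act))

include h0 h1 h2 hcen

theorem gU_mono_step {a b : W} {m1 m2 d n1 n2 e : ℤ}
    (hstep : (∃ t, cs.IsReflection t ∧ b = t * a) ∧ cs.length a < cs.length b)
    (ha : Md act a m1 m2 d) (hb : Md act b n1 n2 e) :
    gUf m1 m2 d ≤ gUf n1 n2 e ∧ gUf m2 m1 d ≤ gUf n2 n1 e := by
  obtain ⟨⟨t, ht, rfl⟩, hlen⟩ := hstep
  obtain ⟨k, hcase⟩ := refl_classify cs act h0 h1 h2 t ht
  have hd := ha.1
  rw [length_eq_NF cs act h0 h1 h2 hcen a m1 m2 d ha,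
    length_eq_NF cs act h0 h1 h2 hcen (t*a) n1 n2 e hb] at hlen
  have hc : cen act (t * a) = act t (cen act a) := cen_mul act t a
  rcases hcase with hk | hk | hk
  · obtain ⟨e1, e2, e3⟩ := Md_unique act hb (Md_step1 act ha k (hc.trans (hk _)))
    constructor
    · exact stepU1 m1 m2 d n1 n2 e k hd e1 e2 e3 hlen
    · refine stepU2 m2 m1 d n2 n1 e k hd (by omega) (by omega) e3 ?_
      simp only [NF] at hlen ⊢; omega
  · obtain ⟨e1, e2, e3⟩ := Md_unique act hb (Md_step2 act ha k (hc.trans (hk _)))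
    constructor
    · exact stepU2 m1 m2 d n1 n2 e k hd e1 e2 e3 hlen
    · refine stepU1 m2 m1 d n2 n1 e k hd (by omega) (by omega) e3 ?_
      simp only [NF] at hlen ⊢; omega
  · obtain ⟨e1, e2, e3⟩ := Md_unique act hb (Md_step3 act ha k (hc.trans (hk _)))
    constructor
    · exact stepU3 m1 m2 d n1 n2 e k hd e1 e2 e3 hlen
    · refine stepU3 m2 m1 d n2 n1 e k hd (by omega) (by omega) e3 ?_
      simp only [NF] at hlen ⊢; omega

theorem gU_mono {x y : W} (h : bruhatLE cs x y) {m1 m2 d n1 n2 e : ℤ}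
    (hx : Md act x m1 m2 d) (hy : Md act y n1 n2 e) :
    gUf m1 m2 d ≤ gUf n1 n2 e ∧ gUf m2 m1 d ≤ gUf n2 n1 e := by
  rcases h with rfl | h
  · obtain ⟨e1, e2, e3⟩ := Md_unique act hx hy
    subst e1; subst e2; subst e3
    exact ⟨le_rfl, le_rfl⟩
  · induction h generalizing n1 n2 e with
    | single hstep => exact gU_mono_step cs act h0 h1 h2 hcen hstep hx hy
    | @tail b c hxb hstep ih =>
      obtain ⟨p1, p2, pd, hpb⟩ := Md_exists cs act h0 h1 h2 b
      obtain ⟨i1, i2⟩ := ih hpb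
      obtain ⟨j1, j2⟩ := gU_mono_step cs act h0 h1 h2 hcen hstep hpb hy
      exact ⟨i1.trans j1, i2.trans j2⟩

theorem Fid_data {z : W} {m1 m2 d : ℤ} (h : Md act z m1 m2 d) (hz : cen act z ∈ Fid) :
    0 ≤ m1 ∧ 0 ≤ m2 ∧ 0 ≤ m1 + m2 - d := by
  obtain ⟨hd, hp⟩ := h
  obtain ⟨f1, f2, f3⟩ := hz
  rw [hp, B2_a1'] at f1
  rw [hp, B2_a2'] at f2
  rw [hp, B2_rho'] at f3
  simp only at f1 f2 f3
  have i1 : (-2 : ℝ) ≤ (3*m1 - d : ℤ) := by push_cast; linarith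
  have i2 : (-2 : ℝ) ≤ (3*m2 - d : ℤ) := by push_cast; linarith
  have i3 : (-1 : ℝ) ≤ (3*(m1+m2) - 2*d : ℤ) := by push_cast; linarith
  have i1' : (-2 : ℤ) ≤ 3*m1 - d := by exact_mod_cast i1
  have i2' : (-2 : ℤ) ≤ 3*m2 - d := by exact_mod_cast i2
  have i3' : (-1 : ℤ) ≤ 3*(m1+m2) - 2*d := by exact_mod_cast i3
  omega

omit h0 h1 h2 hcen in
theorem cmp_iff {z z' : W} {m1 m2 d n1 n2 e : ℤ}
    (h : Md act z m1 m2 d) (h' : Md act z' n1 n2 e) :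
    (0 ≤ B2 fw1 (cen act z' - cen act z) ↔ 2*m1+m2-d ≤ 2*n1+n2-e) ∧
    (0 ≤ B2 fw2 (cen act z' - cen act z) ↔ m1+2*m2-d ≤ n1+2*n2-e) := by
  have hx : B2 fw1 (cen act z' - cen act z)
      = (((2*n1+n2-e : ℤ) : ℝ) - ((2*m1+m2-d : ℤ) : ℝ))/3 := by
    rw [B2_fw1, Prod.fst_sub, h.2, h'.2]
    push_cast; ring
  have hy : B2 fw2 (cen act z' - cen act z)
      = (((n1+2*n2-e : ℤ) : ℝ) - ((m1+2*m2-d : ℤ) : ℝ))/3 := by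
    rw [B2_fw2, Prod.snd_sub, h.2, h'.2]
    push_cast; ring
  rw [hx, hy]
  constructor <;>
  · rw [le_div_iff₀ (by norm_num : (0:ℝ) < 3), zero_mul, sub_nonneg, Int.cast_le]

theorem chain_le :
    ∀ (N : ℕ) (z z' : W) (m1 m2 d n1 n2 e : ℤ), Md act z m1 m2 d → Md act z' n1 n2 e →
      0 ≤ m1 → 0 ≤ m2 → 0 ≤ m1+m2-d → 0 ≤ n1 → 0 ≤ n2 → 0 ≤ n1+n2-e →
      2*m1+m2-d ≤ 2*n1+n2-e → m1+2*m2-d ≤ n1+2*n2-e →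
      (2*n1+n2-e) - (2*m1+m2-d) + ((n1+2*n2-e) - (m1+2*m2-d)) ≤ (N : ℤ) →
      bruhatLE cs z z' := by
  intro N
  induction N with
  | zero =>
    intro z z' m1 m2 d n1 n2 e hz hz' c1 c2 c3 c4 c5 c6 hu hv hN
    have hd := hz.1
    have he := hz'.1
    have e1 : m1 = n1 := by omega
    have e2 : m2 = n2 := by omega
    have e3 : d = e := by omega
    left
    apply hcen
    rw [hz.2, hz'.2, e1, e2, e3]
  | succ N ih =>
    intro z z' m1 m2 d n1 n2 e hz hz' c1 c2 c3 c4 c5 c6 hu hv hN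
    have hd := hz.1
    have he := hz'.1
    by_cases hueq : 2*m1+m2-d = 2*n1+n2-e ∧ m1+2*m2-d = n1+2*n2-e
    · have e1 : m1 = n1 := by omega
      have e2 : m2 = n2 := by omega
      have e3 : d = e := by omega
      left
      apply hcen
      rw [hz.2, hz'.2, e1, e2, e3]
    · rcases hd with hd | hd
      · -- type B: single root moves
        by_cases huu : 2*m1+m2-d < 2*n1+n2-e
        · -- move s_{α₁, m1}
          have hc2 : cen act (T1 cs m1 * z) = reflE a1 ((m1:ℤ):ℝ) (cen act z) := by
            rw [cen_mul act, act_T1 cs act h0 h1 h2]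
          have hz2 := Md_step1 act hz m1 hc2
          have hlt : cs.length z < cs.length (T1 cs m1 * z) := by
            rw [length_eq_NF cs act h0 h1 h2 hcen z m1 m2 d hz,
              length_eq_NF cs act h0 h1 h2 hcen _ _ _ _ hz2]
            simp only [NF]; omega
          have hstep : bruhatLT cs z (T1 cs m1 * z) :=
            Relation.TransGen.single ⟨⟨T1 cs m1, isRef_T1 cs m1, rfl⟩, hlt⟩
          have hrec := ih (T1 cs m1 * z) z' _ _ _ n1 n2 e hz2 hz'
            (by omega) (by omega) (by omega) c4 c5 c6 (by omega) (by omega) (by omega)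
          exact Or.inr (bruhatLT_le_trans hstep hrec)
        · -- u equal, v strict: move s_{α₂, m2}
          have hc2 : cen act (T2 cs m2 * z) = reflE a2 ((m2:ℤ):ℝ) (cen act z) := by
            rw [cen_mul act, act_T2 cs act h0 h1 h2]
          have hz2 := Md_step2 act hz m2 hc2
          have hlt : cs.length z < cs.length (T2 cs m2 * z) := by
            rw [length_eq_NF cs act h0 h1 h2 hcen z m1 m2 d hz,
              length_eq_NF cs act h0 h1 h2 hcen _ _ _ _ hz2]
            simp only [NF]; omega
          have hstep : bruhatLT cs z (T2 cs m2 * z) :=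
            Relation.TransGen.single ⟨⟨T2 cs m2, isRef_T2 cs m2, rfl⟩, hlt⟩
          have hrec := ih (T2 cs m2 * z) z' _ _ _ n1 n2 e hz2 hz'
            (by omega) (by omega) (by omega) c4 c5 c6 (by omega) (by omega) (by omega)
          exact Or.inr (bruhatLT_le_trans hstep hrec)
      · -- type A
        by_cases hboth : 2*m1+m2-d < 2*n1+n2-e ∧ m1+2*m2-d < n1+2*n2-e
        · -- move s_{ρ, m1+m2-1}
          have hc2 : cen act (T3 cs (m1+m2-1) * z)
              = reflE rho2 ((m1+m2-1 : ℤ):ℝ) (cen act z) := by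
            rw [cen_mul act, act_T3 cs act h0 h1 h2]
          have hz2 := Md_step3 act hz (m1+m2-1) hc2
          have hlt : cs.length z < cs.length (T3 cs (m1+m2-1) * z) := by
            rw [length_eq_NF cs act h0 h1 h2 hcen z m1 m2 d hz,
              length_eq_NF cs act h0 h1 h2 hcen _ _ _ _ hz2]
            simp only [NF]; omega
          have hstep : bruhatLT cs z (T3 cs (m1+m2-1) * z) :=
            Relation.TransGen.single ⟨⟨T3 cs (m1+m2-1), isRef_T3 cs (m1+m2-1), rfl⟩, hlt⟩
          have hrec := ih (T3 cs (m1+m2-1) * z) z' _ _ _ n1 n2 e hz2 hz'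
            (by omega) (by omega) (by omega) c4 c5 c6 (by omega) (by omega) (by omega)
          exact Or.inr (bruhatLT_le_trans hstep hrec)
        · by_cases huu : 2*m1+m2-d < 2*n1+n2-e
          · -- v equal, u strict: move s_{α₁, m1}; here m2 ≥ 1
            have hm2 : 1 ≤ m2 := by omega
            have hc2 : cen act (T1 cs m1 * z) = reflE a1 ((m1:ℤ):ℝ) (cen act z) := by
              rw [cen_mul act, act_T1 cs act h0 h1 h2]
            have hz2 := Md_step1 act hz m1 hc2
            have hlt : cs.length z < cs.length (T1 cs m1 * z) := by
              rw [length_eq_NF cs act h0 h1 h2 hcen z m1 m2 d hz,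
                length_eq_NF cs act h0 h1 h2 hcen _ _ _ _ hz2]
              simp only [NF]; omega
            have hstep : bruhatLT cs z (T1 cs m1 * z) :=
              Relation.TransGen.single ⟨⟨T1 cs m1, isRef_T1 cs m1, rfl⟩, hlt⟩
            have hrec := ih (T1 cs m1 * z) z' _ _ _ n1 n2 e hz2 hz'
              (by omega) (by omega) (by omega) c4 c5 c6 (by omega) (by omega) (by omega)
            exact Or.inr (bruhatLT_le_trans hstep hrec)
          · -- u equal, v strict: move s_{α₂, m2}; here m1 ≥ 1
            have hm1 : 1 ≤ m1 := by omega
            have hc2 : cen act (T2 cs m2 * z) = reflE a2 ((m2:ℤ):ℝ) (cen act z) := by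
              rw [cen_mul act, act_T2 cs act h0 h1 h2]
            have hz2 := Md_step2 act hz m2 hc2
            have hlt : cs.length z < cs.length (T2 cs m2 * z) := by
              rw [length_eq_NF cs act h0 h1 h2 hcen z m1 m2 d hz,
                length_eq_NF cs act h0 h1 h2 hcen _ _ _ _ hz2]
              simp only [NF]; omega
            have hstep : bruhatLT cs z (T2 cs m2 * z) :=
              Relation.TransGen.single ⟨⟨T2 cs m2, isRef_T2 cs m2, rfl⟩, hlt⟩
            have hrec := ih (T2 cs m2 * z) z' _ _ _ n1 n2 e hz2 hz'
              (by omega) (by omega) (by omega) c4 c5 c6 (by omega) (by omega) (by omega)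
            exact Or.inr (bruhatLT_le_trans hstep hrec)

end Main

/-- local description of the Bruhat order in the zone `F_id`. -/
theorem statement5
    {W : Type*} [Group W] {M : CoxeterMatrix (Fin 3)} (cs : CoxeterSystem M W)
    (hM : ∀ i j : Fin 3, M i j = if i = j then 1 else 3)
    (act : W →* Equiv.Perm E2)
    (h0 : ∀ v, act (cs.simple 0) v = reflE rho2 (-1) v)
    (h1 : ∀ v, act (cs.simple 1) v = reflE a1 0 v)
    (h2 : ∀ v, act (cs.simple 2) v = reflE a2 0 v)
    (hcen : Function.Injective (cen act))
    (z z' : W) (hz : cen act z ∈ Fid) (hz' : cen act z' ∈ Fid) :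
    bruhatLE cs z z' ↔
      0 ≤ B2 fw1 (cen act z' - cen act z) ∧ 0 ≤ B2 fw2 (cen act z' - cen act z) := by
  obtain ⟨m1, m2, d, hdz⟩ := Md_exists cs act h0 h1 h2 z
  obtain ⟨n1, n2, e, hdz'⟩ := Md_exists cs act h0 h1 h2 z'
  obtain ⟨c1, c2, c3⟩ := Fid_data cs act h0 h1 h2 hcen hdz hz
  obtain ⟨c4, c5, c6⟩ := Fid_data cs act h0 h1 h2 hcen hdz' hz'
  obtain ⟨iff1, iff2⟩ := cmp_iff act hdz hdz'
  rw [iff1, iff2]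
  have hd := hdz.1
  have he := hdz'.1
  constructor
  · intro hle
    obtain ⟨g1, g2⟩ := gU_mono cs act h0 h1 h2 hcen hle hdz hdz'
    have e1 : gUf m1 m2 d = 2*m1+m2-d-1 := by simp only [gUf]; omega
    have e2 : gUf m2 m1 d = m1+2*m2-d-1 := by simp only [gUf]; omega
    have e3 : gUf n1 n2 e = 2*n1+n2-e-1 := by simp only [gUf]; omega
    have e4 : gUf n2 n1 e = n1+2*n2-e-1 := by simp only [gUf]; omega
    omega
  · rintro ⟨hu, hv⟩
    exact chain_le cs act h0 h1 h2 hcen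
      ((2*n1+n2-e) - (2*m1+m2-d) + ((n1+2*n2-e) - (m1+2*m2-d))).toNat z z'
      m1 m2 d n1 n2 e hdz hdz' c1 c2 c3 c4 c5 c6 hu hv (by omega)
end
end
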